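/- arXiv:0904.3147 — 9 statements merged into one kernel-verified Lean document; each statement's English description precedes it below -/
import Mathlib

section
/- Let β ∈ ℝ and let u : ℝ → ℝ be four times continuously differentiable with u''''(x) + β² u''(x) + e^{u(x)} − 1 = 0 for all x ∈ ℝ, and suppose u(x), u′(x), u″(x), u‴(x) all tend to 0 as x → −∞. Then for every x ∈ ℝ: u′(x) u‴(x) − (u″(x))²/2 + (β²/2)(u′(x))² + e^{u(x)} − u(x) − 1 = 0. -/
open MeasureTheory Real Filter

/-- Pohozaev-type pointwise identity for the suspension-bridge equation:
if `u'''' + β²u'' + e^u - 1 = 0` on `ℝ` and `u, u', u'', u''' → 0` as `x → -∞`, then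
`u'u''' - (u'')²/2 + (β²/2)(u')² + e^u - u - 1 = 0` everywhere. -/
theorem stmt4 (β : ℝ) (u : ℝ → ℝ) (hu : ContDiff ℝ 4 u)
    (heq : ∀ x : ℝ, iteratedDeriv 4 u x + β ^ 2 * iteratedDeriv 2 u x
        + Real.exp (u x) - 1 = 0)
    (h0 : Tendsto u atBot (nhds 0))
    (h1 : Tendsto (deriv u) atBot (nhds 0))
    (h2 : Tendsto (iteratedDeriv 2 u) atBot (nhds 0))
    (h3 : Tendsto (iteratedDeriv 3 u) atBot (nhds 0)) :
    ∀ x : ℝ, deriv u x * iteratedDeriv 3 u x - (iteratedDeriv 2 u x) ^ 2 / 2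
      + (β ^ 2 / 2) * (deriv u x) ^ 2 + Real.exp (u x) - u x - 1 = 0 := by
  have hck : ∀ k : ℕ, k ≤ 3 → ContDiff ℝ 1 (iteratedDeriv k u) := by
    intro k hk
    rw [iteratedDeriv_eq_iterate]
    have h4 : ContDiff ℝ ((1 + k : ℕ) : WithTop ℕ∞) u := by
      apply hu.of_le
      have : ((1 + k : ℕ) : WithTop ℕ∞) ≤ ((4 : ℕ) : WithTop ℕ∞) := by
        exact_mod_cast (by omega : (1:ℕ) + k ≤ 4)
      simpa using this
    exact ContDiff.iterate_deriv' 1 k h4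
  have hd0 : Differentiable ℝ u := (hck 0 (by norm_num)).differentiable one_ne_zero
  have hd1 : Differentiable ℝ (deriv u) := by
    have := (hck 1 (by norm_num)).differentiable one_ne_zero
    simpa [iteratedDeriv_one] using this
  have hd2 : Differentiable ℝ (iteratedDeriv 2 u) := (hck 2 (by norm_num)).differentiable one_ne_zero
  have hd3 : Differentiable ℝ (iteratedDeriv 3 u) := (hck 3 (by norm_num)).differentiable one_ne_zero
  have hder1 : deriv (deriv u) = iteratedDeriv 2 u := by
    rw [iteratedDeriv_succ, iteratedDeriv_one]
  have hder2 : deriv (iteratedDeriv 2 u) = iteratedDeriv 3 u := (iteratedDeriv_succ).symm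
  have hder3 : deriv (iteratedDeriv 3 u) = iteratedDeriv 4 u := (iteratedDeriv_succ).symm
  set E : ℝ → ℝ := fun x => deriv u x * iteratedDeriv 3 u x - (iteratedDeriv 2 u x) ^ 2 / 2
      + (β ^ 2 / 2) * (deriv u x) ^ 2 + Real.exp (u x) - u x - 1 with hE
  have hEdiff : ∀ x, HasDerivAt E 0 x := by
    intro x
    have hm : HasDerivAt (fun y => deriv u y * iteratedDeriv 3 u y)
        (iteratedDeriv 2 u x * iteratedDeriv 3 u x + deriv u x * iteratedDeriv 4 u x) x :=
      (hder1 ▸ (hd1 x).hasDerivAt).mul (hder3 ▸ (hd3 x).hasDerivAt)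
    have hp2 : HasDerivAt (fun y => (iteratedDeriv 2 u y) ^ 2 / 2)
        ((2 * iteratedDeriv 2 u x ^ 1 * iteratedDeriv 3 u x) / 2) x :=
      ((hder2 ▸ (hd2 x).hasDerivAt).pow 2).div_const 2
    have hp1 : HasDerivAt (fun y => (β ^ 2 / 2) * (deriv u y) ^ 2)
        ((β ^ 2 / 2) * (2 * deriv u x ^ 1 * iteratedDeriv 2 u x)) x :=
      ((hder1 ▸ (hd1 x).hasDerivAt).pow 2).const_mul _
    have he : HasDerivAt (fun y => Real.exp (u y)) (Real.exp (u x) * deriv u x) x :=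
      ((hd0 x).hasDerivAt).exp
    have H := ((((hm.sub hp2).add hp1).add he).sub (hd0 x).hasDerivAt).sub_const 1
    refine H.congr_deriv ?_
    have h := heq x
    linear_combination (deriv u x) * h
  have hconst : ∀ x y : ℝ, E x = E y := by
    intro x y
    exact is_const_of_deriv_eq_zero (fun z => (hEdiff z).differentiableAt)
      (fun z => (hEdiff z).deriv) x y
  have hlim : Tendsto E atBot (nhds 0) := by
    have : Tendsto E atBot (nhds (0 * 0 - 0 ^ 2 / 2 + (β ^ 2 / 2) * 0 ^ 2 + Real.exp 0 - 0 - 1)) := by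
      apply Tendsto.sub_const
      apply Tendsto.sub ?_ h0
      apply Tendsto.add ?_ (Real.continuous_exp.continuousAt.tendsto.comp h0)
      apply Tendsto.add
      · exact Tendsto.sub (h1.mul h3) ((h2.pow 2).div_const 2)
      · exact ((h1.pow 2).const_mul _)
    simpa using this
  intro x
  have : Tendsto E atBot (nhds (E x)) := by
    have : E = fun _ => E x := funext fun y => hconst y x
    rw [this]; exact tendsto_const_nhds
  exact (tendsto_nhds_unique this hlim) ▸ rfl
end

section
/- Let k > 1 and a > 0. If u : [−a, a] → ℝ is four times continuously differentiable and satisfies u''''(x) + 2u''(x) + k² u(x) = 0 for all x ∈ [−a, a], together with the Navier boundary conditions u(−a) = u(a) = 0 and u''(−a) = u''(a) = 0, then u is identically zero on [−a, a]. -/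
open MeasureTheory Real Filter

/-- For `k > 1`, the Navier boundary value problem `u'''' + 2u'' + k²u = 0` on `[-a, a]`
with `u(±a) = u''(±a) = 0` has only the trivial solution. -/
theorem stmt7 (k a : ℝ) (hk : 1 < k) (ha : 0 < a) (u : ℝ → ℝ)
    (hu : ContDiffOn ℝ 4 u (Set.Icc (-a) a))
    (heq : ∀ x ∈ Set.Icc (-a) a,
      iteratedDerivWithin 4 u (Set.Icc (-a) a) x
        + 2 * iteratedDerivWithin 2 u (Set.Icc (-a) a) x + k ^ 2 * u x = 0)
    (hbc1 : u (-a) = 0) (hbc2 : u a = 0)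
    (hbc3 : iteratedDerivWithin 2 u (Set.Icc (-a) a) (-a) = 0)
    (hbc4 : iteratedDerivWithin 2 u (Set.Icc (-a) a) a = 0) :
    ∀ x ∈ Set.Icc (-a) a, u x = 0 := by
  have haa : -a < a := by linarith
  set s := Set.Icc (-a) a with hs_def
  have hs : UniqueDiffOn ℝ s := uniqueDiffOn_Icc haa
  have huicc : Set.uIcc (-a) a = s := Set.uIcc_of_le haa.le
  set U : ℕ → ℝ → ℝ := fun n => iteratedDerivWithin n u s with hU_def
  have hU0 : U 0 = u := iteratedDerivWithin_zero
  have hcont : ∀ n : ℕ, n ≤ 4 → ContinuousOn (U n) s := fun n hn =>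
    hu.continuousOn_iteratedDerivWithin (by exact_mod_cast hn) hs
  have hcu : ContinuousOn u s := hu.continuousOn
  have hderiv : ∀ n : ℕ, n < 4 → ∀ x ∈ s, HasDerivWithinAt (U n) (U (n+1) x) s x := by
    intro n hn x hx
    have hdiff : DifferentiableWithinAt ℝ (U n) s x :=
      (hu.differentiableOn_iteratedDerivWithin (by exact_mod_cast hn) hs) x hx
    have h2 := hdiff.hasDerivWithinAt
    have h3 : U (n+1) x = derivWithin (U n) s x := congrFun iteratedDerivWithin_succ x
    rwa [h3]
  have hderiv0 : ∀ x ∈ s, HasDerivWithinAt u (U 1 x) s x := by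
    intro x hx
    have := hderiv 0 (by norm_num) x hx
    rwa [hU0] at this
  -- interval integrability of products
  have hip : ∀ m n : ℕ, m ≤ 4 → n ≤ 4 →
      IntervalIntegrable (fun x => U m x * U n x) volume (-a) a := fun m n hm hn =>
    (((hcont m hm).mul (hcont n hn)).mono huicc.subset).intervalIntegrable
  have hipu : ∀ m : ℕ, m ≤ 4 → IntervalIntegrable (fun x => U m x * u x) volume (-a) a :=
    fun m hm => (((hcont m hm).mul hcu).mono huicc.subset).intervalIntegrable
  have hiuu : IntervalIntegrable (fun x => u x * u x) volume (-a) a :=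
    ((hcu.mul hcu).mono huicc.subset).intervalIntegrable
  -- integration by parts instances
  have e1 : (∫ x in (-a)..a, U 4 x * u x) + (∫ x in (-a)..a, U 3 x * U 1 x) = 0 := by
    rw [← intervalIntegral.integral_add (hipu 4 le_rfl) (hip 3 1 (by norm_num) (by norm_num))]
    rw [intervalIntegral.integral_deriv_mul_eq_sub_of_hasDerivWithinAt
      (u' := U 4) (v' := U 1)
      (fun x hx => huicc ▸ hderiv 3 (by norm_num) x (huicc ▸ hx))
      (fun x hx => huicc ▸ hderiv0 x (huicc ▸ hx))
      (((hcont 4 le_rfl).mono huicc.subset).intervalIntegrable)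
      (((hcont 1 (by norm_num)).mono huicc.subset).intervalIntegrable)]
    rw [hbc1, hbc2]; ring
  have e2 : (∫ x in (-a)..a, U 3 x * U 1 x) + (∫ x in (-a)..a, U 2 x * U 2 x) = 0 := by
    rw [← intervalIntegral.integral_add (hip 3 1 (by norm_num) (by norm_num))
      (hip 2 2 (by norm_num) (by norm_num))]
    rw [intervalIntegral.integral_deriv_mul_eq_sub_of_hasDerivWithinAt
      (u' := U 3) (v' := U 2)
      (fun x hx => huicc ▸ hderiv 2 (by norm_num) x (huicc ▸ hx))
      (fun x hx => huicc ▸ hderiv 1 (by norm_num) x (huicc ▸ hx))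
      (((hcont 3 (by norm_num)).mono huicc.subset).intervalIntegrable)
      (((hcont 2 (by norm_num)).mono huicc.subset).intervalIntegrable)]
    have h2a : U 2 a = 0 := hbc4
    have h2na : U 2 (-a) = 0 := hbc3
    rw [h2a, h2na]; ring
  have e3 : (∫ x in (-a)..a, U 2 x * u x) + (∫ x in (-a)..a, U 1 x * U 1 x) = 0 := by
    rw [← intervalIntegral.integral_add (hipu 2 (by norm_num)) (hip 1 1 (by norm_num) (by norm_num))]
    rw [intervalIntegral.integral_deriv_mul_eq_sub_of_hasDerivWithinAt
      (u' := U 2) (v' := U 1)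
      (fun x hx => huicc ▸ hderiv 1 (by norm_num) x (huicc ▸ hx))
      (fun x hx => huicc ▸ hderiv0 x (huicc ▸ hx))
      (((hcont 2 (by norm_num)).mono huicc.subset).intervalIntegrable)
      (((hcont 1 (by norm_num)).mono huicc.subset).intervalIntegrable)]
    rw [hbc1, hbc2]; ring
  -- the equation integrated against u
  have e4 : (∫ x in (-a)..a, U 4 x * u x) + 2 * (∫ x in (-a)..a, U 2 x * u x)
      + k ^ 2 * (∫ x in (-a)..a, u x * u x) = 0 := by
    have h0 : (∫ x in (-a)..a, (U 4 x * u x + 2 * (U 2 x * u x)) + k ^ 2 * (u x * u x)) = 0 := by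
      rw [intervalIntegral.integral_congr (g := fun _ => (0:ℝ))]
      · simp
      · intro x hx
        rw [huicc] at hx
        have h := heq x hx
        have : U 4 x + 2 * U 2 x + k ^ 2 * u x = 0 := h
        linear_combination this * u x
    rw [intervalIntegral.integral_add ((hipu 4 le_rfl).add ((hipu 2 (by norm_num)).const_mul 2))
      (hiuu.const_mul (k ^ 2)),
      intervalIntegral.integral_add (hipu 4 le_rfl) ((hipu 2 (by norm_num)).const_mul 2),
      intervalIntegral.integral_const_mul, intervalIntegral.integral_const_mul] at h0
    linarith [h0]
  -- nonnegativity
  have hQ : 0 ≤ ∫ x in (-a)..a, (U 2 x + u x) * (U 2 x + u x) :=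
    intervalIntegral.integral_nonneg haa.le (fun x _ => mul_self_nonneg _)
  have hF : 0 ≤ ∫ x in (-a)..a, u x * u x :=
    intervalIntegral.integral_nonneg haa.le (fun x _ => mul_self_nonneg _)
  have hQexp : (∫ x in (-a)..a, (U 2 x + u x) * (U 2 x + u x))
      = (∫ x in (-a)..a, U 2 x * U 2 x) + 2 * (∫ x in (-a)..a, U 2 x * u x)
        + (∫ x in (-a)..a, u x * u x) := by
    have : (∫ x in (-a)..a, (U 2 x + u x) * (U 2 x + u x))
        = ∫ x in (-a)..a, (U 2 x * U 2 x + 2 * (U 2 x * u x)) + u x * u x := by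
      apply intervalIntegral.integral_congr
      intro x _; ring
    rw [this, intervalIntegral.integral_add
      ((hip 2 2 (by norm_num) (by norm_num)).add ((hipu 2 (by norm_num)).const_mul 2)) hiuu,
      intervalIntegral.integral_add (hip 2 2 (by norm_num) (by norm_num))
      ((hipu 2 (by norm_num)).const_mul 2),
      intervalIntegral.integral_const_mul]
  have hk2 : 1 < k ^ 2 := by nlinarith
  have hFzero : (∫ x in (-a)..a, u x * u x) = 0 := by nlinarith [hQ, hF, e1, e2, e3, e4, hQexp]
  -- conclude u = 0 on Icc
  have hae : (fun x => u x * u x) =ᵐ[volume.restrict (Set.Ioc (-a) a)] 0 :=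
    ((intervalIntegral.integral_eq_zero_iff_of_le_of_nonneg_ae haa.le
      (Filter.Eventually.of_forall (fun x => mul_self_nonneg _)) hiuu).mp hFzero)
  rw [MeasureTheory.restrict_Ioc_eq_restrict_Icc] at hae
  have heqz : Set.EqOn (fun x => u x * u x) 0 s :=
    Measure.eqOn_Icc_of_ae_eq (μ := volume) haa.ne hae
      (hcu.mul hcu) continuousOn_const
  intro x hx
  exact mul_self_eq_zero.mp (heqz hx)
end

section
/- For every a > 0 and every twice continuously differentiable function v : [−a, a] → ℝ with v(−a) = v(a) = 0, one has ∫_{−a}^{a} (v″(x))² dx ≥ (15/(4a⁵)) (∫_{−a}^{a} v(x) dx)². -/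
open MeasureTheory Real Filter Topology

/-- For every `a > 0` and every `v ∈ C²[-a, a]` with `v(±a) = 0`,
`∫_{-a}^{a}(v'')² ≥ (15/(4a⁵)) (∫_{-a}^{a} v)²`. -/
theorem stmt9 (a : ℝ) (ha : 0 < a) (v : ℝ → ℝ)
    (hv : ContDiffOn ℝ 2 v (Set.Icc (-a) a))
    (h1 : v (-a) = 0) (h2 : v a = 0) :
    (∫ x in (-a)..a, (deriv (deriv v) x) ^ 2)
      ≥ (15 / (4 * a ^ 5)) * (∫ x in (-a)..a, v x) ^ 2 := by
  have haa : -a < a := by linarith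
  set s : Set ℝ := Set.Icc (-a) a with hs_def
  have hus : UniqueDiffOn ℝ s := uniqueDiffOn_Icc haa
  set f : ℝ → ℝ := derivWithin v s with hf_def
  set g : ℝ → ℝ := derivWithin f s with hg_def
  have hf1 : ContDiffOn ℝ 1 f s := hv.derivWithin hus (by norm_num)
  have hgc : ContinuousOn g s := (ContDiffOn.derivWithin (m := 0) hf1 hus (by norm_num)).continuousOn
  have hfc : ContinuousOn f s := hf1.continuousOn
  have hvc : ContinuousOn v s := hv.continuousOn
  have hmem : ∀ x ∈ Set.Ioo (-a) a, s ∈ 𝓝 x := fun x hx => Icc_mem_nhds hx.1 hx.2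
  have hdv : ∀ x ∈ Set.Ioo (-a) a, HasDerivAt v (f x) x := fun x hx =>
    ((hv.differentiableOn (by norm_num) x (Set.Ioo_subset_Icc_self hx)).hasDerivWithinAt).hasDerivAt
      (hmem x hx)
  have hdf : ∀ x ∈ Set.Ioo (-a) a, HasDerivAt f (g x) x := fun x hx =>
    ((hf1.differentiableOn (by norm_num) x (Set.Ioo_subset_Icc_self hx)).hasDerivWithinAt).hasDerivAt
      (hmem x hx)
  -- deriv (deriv v) = g on the open interval
  have hderiv_eq : ∀ x ∈ Set.Ioo (-a) a, deriv (deriv v) x = g x := by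
    intro x hx
    have hloc : Set.EqOn (deriv v) f (Set.Ioo (-a) a) := fun y hy => (hdv y hy).deriv
    have hev : deriv v =ᶠ[𝓝 x] f := eventuallyEq_of_mem (isOpen_Ioo.mem_nhds hx) hloc
    rw [hev.deriv_eq]
    exact (hdf x hx).deriv
  -- replace the integrand
  have hA : ∀ᵐ (x : ℝ), x ≠ a := by
    have h0 : volume ({a} : Set ℝ) = 0 := measure_singleton a
    filter_upwards [measure_eq_zero_iff_ae_notMem.mp h0] with x hx
    simpa using hx
  have hInt_eq : (∫ x in (-a)..a, (deriv (deriv v) x) ^ 2) = ∫ x in (-a)..a, (g x) ^ 2 := by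
    apply intervalIntegral.integral_congr_ae
    filter_upwards [hA] with x hxa hxI
    rw [Set.uIoc_of_le haa.le] at hxI
    have hx : x ∈ Set.Ioo (-a) a := ⟨hxI.1, lt_of_le_of_ne hxI.2 hxa⟩
    rw [hderiv_eq x hx]
  -- the weight
  set w : ℝ → ℝ := fun x => (x ^ 2 - a ^ 2) / 2 with hw_def
  have hwderiv : ∀ x : ℝ, HasDerivAt w x x := by
    intro x
    have := (((hasDerivAt_pow 2 x).sub_const (a ^ 2)).div_const 2)
    refine this.congr_deriv ?_
    push_cast
    ring
  have hwcont : Continuous w := by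
    have : Continuous fun x : ℝ => (x ^ 2 - a ^ 2) / 2 := by continuity
    exact this
  have hIcc_eq : Set.uIcc (-a) a = s := Set.uIcc_of_le haa.le
  -- interval integrabilities
  have hint_g2 : IntervalIntegrable (fun x => (g x) ^ 2) volume (-a) a :=
    ContinuousOn.intervalIntegrable_of_Icc haa.le (hgc.pow 2)
  have hint_gw : IntervalIntegrable (fun x => g x * w x) volume (-a) a :=
    ContinuousOn.intervalIntegrable_of_Icc haa.le (hgc.mul hwcont.continuousOn)
  have hint_w2 : IntervalIntegrable (fun x => (w x) ^ 2) volume (-a) a :=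
    ContinuousOn.intervalIntegrable_of_Icc haa.le ((hwcont.pow 2).continuousOn)
  have hint_v : IntervalIntegrable v volume (-a) a :=
    ContinuousOn.intervalIntegrable_of_Icc haa.le hvc
  -- integration by parts via FTC
  have key : (∫ x in (-a)..a, g x * w x) = ∫ x in (-a)..a, v x := by
    set F : ℝ → ℝ := fun x => f x * w x - v x * x with hF_def
    have hFcont : ContinuousOn F s :=
      (hfc.mul hwcont.continuousOn).sub (hvc.mul continuous_id.continuousOn)
    have hFderiv : ∀ x ∈ Set.Ioo (-a) a,
        HasDerivWithinAt F (g x * w x - v x) (Set.Ioi x) x := by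
      intro x hx
      have hd : HasDerivAt F (g x * w x - v x) x := by
        have := ((hdf x hx).mul (hwderiv x)).sub ((hdv x hx).mul (hasDerivAt_id x))
        refine this.congr_deriv ?_
        simp only [id_eq]
        ring
      exact hd.hasDerivWithinAt
    have hint : IntervalIntegrable (fun x => g x * w x - v x) volume (-a) a :=
      hint_gw.sub hint_v
    have h0 : (∫ x in (-a)..a, (g x * w x - v x)) = F a - F (-a) :=
      intervalIntegral.integral_eq_sub_of_hasDeriv_right_of_le haa.le hFcont hFderiv hint
    have hFa : F a = 0 := by simp [hF_def, hw_def, h2]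
    have hFma : F (-a) = 0 := by simp [hF_def, hw_def, h1]
    rw [intervalIntegral.integral_sub hint_gw hint_v, hFa, hFma] at h0
    linarith
  -- compute ∫ w²
  have hC : (∫ x in (-a)..a, (w x) ^ 2) = 4 * a ^ 5 / 15 := by
    have hexp : ∀ x : ℝ, (w x) ^ 2 = (1 / 4) * x ^ 4 - (a ^ 2 / 2) * x ^ 2 + a ^ 4 / 4 := by
      intro x; simp only [hw_def]; ring
    simp_rw [hexp]
    have i4 : IntervalIntegrable (fun x : ℝ => (1 / 4 : ℝ) * x ^ 4) volume (-a) a :=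
      (intervalIntegral.intervalIntegrable_pow 4).const_mul _
    have i2 : IntervalIntegrable (fun x : ℝ => (a ^ 2 / 2) * x ^ 2) volume (-a) a :=
      (intervalIntegral.intervalIntegrable_pow 2).const_mul _
    rw [intervalIntegral.integral_add (i4.sub i2) intervalIntegrable_const,
      intervalIntegral.integral_sub i4 i2, intervalIntegral.integral_const_mul,
      intervalIntegral.integral_const_mul, integral_pow, integral_pow,
      intervalIntegral.integral_const]
    simp only [smul_eq_mul]
    ring
  -- Cauchy–Schwarz
  set A : ℝ := ∫ x in (-a)..a, (g x) ^ 2 with hA_def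
  set B : ℝ := ∫ x in (-a)..a, v x with hB_def
  have hCpos : (0 : ℝ) < 4 * a ^ 5 / 15 := by positivity
  have hCS : B ^ 2 ≤ A * (4 * a ^ 5 / 15) := by
    set t : ℝ := B / (4 * a ^ 5 / 15) with ht_def
    have hnn : (0 : ℝ) ≤ ∫ x in (-a)..a, (g x - t * w x) ^ 2 :=
      intervalIntegral.integral_nonneg haa.le (fun x _ => sq_nonneg _)
    have hexp : ∀ x : ℝ, (g x - t * w x) ^ 2 =
        (g x) ^ 2 - (2 * t) * (g x * w x) + t ^ 2 * (w x) ^ 2 := by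
      intro x; ring
    have hint_tgw : IntervalIntegrable (fun x => (2 * t) * (g x * w x)) volume (-a) a :=
      hint_gw.const_mul _
    have hint_tw2 : IntervalIntegrable (fun x => t ^ 2 * (w x) ^ 2) volume (-a) a :=
      hint_w2.const_mul _
    rw [show (fun x => (g x - t * w x) ^ 2) = fun x =>
        (g x) ^ 2 - (2 * t) * (g x * w x) + t ^ 2 * (w x) ^ 2 from funext hexp] at hnn
    rw [intervalIntegral.integral_add (hint_g2.sub hint_tgw) hint_tw2,
      intervalIntegral.integral_sub hint_g2 hint_tgw,
      intervalIntegral.integral_const_mul, intervalIntegral.integral_const_mul,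
      key, hC] at hnn
    rw [← hA_def] at hnn
    have htB : t * B = B ^ 2 / (4 * a ^ 5 / 15) := by
      rw [ht_def]; field_simp
    have ht2 : t ^ 2 * (4 * a ^ 5 / 15) = B ^ 2 / (4 * a ^ 5 / 15) := by
      rw [ht_def]; field_simp
    have hle : B ^ 2 / (4 * a ^ 5 / 15) ≤ A := by nlinarith [hnn, htB, ht2]
    exact (div_le_iff₀ hCpos).mp hle
  rw [hInt_eq]
  have hfin : 15 / (4 * a ^ 5) * B ^ 2 ≤ A := by
    have h5 : (0 : ℝ) < a ^ 5 := pow_pos ha 5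
    rw [div_mul_eq_mul_div, div_le_iff₀ (by positivity)]
    nlinarith [hCS]
  exact hfin
end

section
/- For every a > 0 and every twice continuously differentiable function v : [−a, a] → ℝ with v(−a) = v(a) = 0, one has ∫_{−a}^{a} (v″(x))² dx ≥ (π²/(4a²)) ∫_{−a}^{a} (v′(x))² dx. -/
open MeasureTheory Real Filter

lemma aux_limit (a : ℝ) (ha : 0 < a) (g : ℝ → ℝ)
    (hg : ContinuousOn g (Set.Icc (-a) a)) (C : ℝ)
    (h : ∀ b : ℝ, 0 < b → b < a → -C * (a - b) ≤ ∫ x in (-b)..b, g x) :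
    0 ≤ ∫ x in (-a)..a, g x := by
  obtain ⟨K, hK⟩ := (isCompact_Icc (a := -a) (b := a)).exists_bound_of_continuousOn hg
  have hint : ∀ u w : ℝ, -a ≤ u → w ≤ a → u ≤ w → IntervalIntegrable g volume u w := by
    intro u w hu hw huw
    apply ContinuousOn.intervalIntegrable
    rw [Set.uIcc_of_le huw]
    exact hg.mono (Set.Icc_subset_Icc hu hw)
  by_contra hcon
  push_neg at hcon
  set F := ∫ x in (-a)..a, g x with hF
  set D := |C| + 2 * |K| + 1 with hD
  have hD0 : 0 < D := by positivity
  set δ := min (a / 2) (-F / (2 * D)) with hδ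
  have hδ0 : 0 < δ := lt_min (by linarith) (by apply div_pos <;> [linarith; positivity])
  have hδa : δ ≤ a / 2 := min_le_left _ _
  have hδF : δ ≤ -F / (2 * D) := min_le_right _ _
  set b := a - δ with hb
  have hb0 : 0 < b := by rw [hb]; linarith
  have hba : b < a := by rw [hb]; linarith
  have i1 := hint (-a) (-b) le_rfl (by linarith) (by linarith)
  have i2 := hint (-b) b (by linarith) hba.le (by linarith)
  have i3 := hint b a (by linarith) le_rfl hba.le
  have e1 := intervalIntegral.integral_add_adjacent_intervals i1 i2
  have i12 := i1.trans i2
  have e2 := intervalIntegral.integral_add_adjacent_intervals i12 i3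
  have hKabs : ∀ u w : ℝ, -a ≤ u → w ≤ a → u ≤ w →
      -(|K| * (w - u)) ≤ ∫ x in u..w, g x := by
    intro u w hu hw huw
    have hb : ‖∫ x in u..w, g x‖ ≤ |K| * |w - u| := by
      apply intervalIntegral.norm_integral_le_of_norm_le_const
      intro x hx
      rw [Set.uIoc_of_le huw] at hx
      exact (hK x ⟨by linarith [hx.1], by linarith [hx.2]⟩).trans (le_abs_self K)
    rw [Real.norm_eq_abs] at hb
    have h2 : |w - u| = w - u := abs_of_nonneg (by linarith)
    rw [h2] at hb
    have := neg_abs_le (∫ x in u..w, g x)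
    linarith [hb]
  have b1 := hKabs (-a) (-b) le_rfl (by linarith) (by linarith)
  have b3 := hKabs b a (by linarith) le_rfl hba.le
  have b2 := h b hb0 hba
  have hab' : a - b = δ := by rw [hb]; ring
  rw [hab'] at b2
  have hbb : (-b) - (-a) = δ := by rw [hb]; ring
  rw [hbb] at b1
  have hba' : a - b = δ := hab'
  rw [hba'] at b3
  have hC : -C * δ ≥ -(|C| * δ) := by
    have := mul_le_mul_of_nonneg_right (le_abs_self C) hδ0.le
    linarith
  have hFge : F ≥ -(D * δ) := by
    have : F = (∫ x in (-a)..(-b), g x) + (∫ x in (-b)..b, g x) + ∫ x in b..a, g x := by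
      rw [hF, ← e2, ← e1]
    rw [this, hD]
    nlinarith [b1, b2, b3, hC]
  have : -(D * δ) ≥ F / 2 := by
    have h2 : δ ≤ -F / (2 * D) := hδF
    have : D * δ ≤ D * (-F / (2 * D)) := by
      exact mul_le_mul_of_nonneg_left h2 hD0.le
    have hDne : (2 * D) ≠ 0 := by positivity
    have : D * (-F / (2 * D)) = -F / 2 := by field_simp
    nlinarith [mul_le_mul_of_nonneg_left h2 hD0.le]
  linarith

set_option maxHeartbeats 1000000 in
/-- For every `a > 0` and every `v ∈ C²[-a, a]` with `v(±a) = 0`,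
`∫_{-a}^{a}(v'')² ≥ (π²/(4a²)) ∫_{-a}^{a}(v')²`. -/
theorem stmt10 (a : ℝ) (ha : 0 < a) (v : ℝ → ℝ)
    (hv : ContDiffOn ℝ 2 v (Set.Icc (-a) a))
    (h1 : v (-a) = 0) (h2 : v a = 0) :
    (∫ x in (-a)..a, (deriv (deriv v) x) ^ 2)
      ≥ (Real.pi ^ 2 / (4 * a ^ 2)) * (∫ x in (-a)..a, (deriv v x) ^ 2) := by
  have hA : -a < a := by linarith
  have hUD : UniqueDiffOn ℝ (Set.Icc (-a) a) := uniqueDiffOn_Icc hA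
  set c := π / (2 * a) with hc
  have hc0 : 0 < c := by rw [hc]; positivity
  have hca : c * a = π / 2 := by rw [hc]; field_simp
  set V1 := derivWithin v (Set.Icc (-a) a) with hV1
  set V2 := derivWithin V1 (Set.Icc (-a) a) with hV2
  have hv1 : ContDiffOn ℝ 1 V1 (Set.Icc (-a) a) := hv.derivWithin hUD (by norm_num)
  have hV1c : ContinuousOn V1 (Set.Icc (-a) a) := hv1.continuousOn
  have hV2c : ContinuousOn V2 (Set.Icc (-a) a) := hv1.continuousOn_derivWithin hUD le_rfl
  have hvc : ContinuousOn v (Set.Icc (-a) a) := hv.continuousOn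
  have hsub : Set.Ioo (-a) a ⊆ Set.Icc (-a) a := Set.Ioo_subset_Icc_self
  have hD1' : ∀ x ∈ Set.Icc (-a) a, HasDerivWithinAt v (V1 x) (Set.Icc (-a) a) x := by
    intro x hx
    exact (hv.differentiableOn (by norm_num) x hx).hasDerivWithinAt
  have hD1 : ∀ x ∈ Set.Ioo (-a) a, HasDerivAt v (V1 x) x := by
    intro x hx
    exact (hD1' x (hsub hx)).hasDerivAt (Icc_mem_nhds hx.1 hx.2)
  have hD2 : ∀ x ∈ Set.Ioo (-a) a, HasDerivAt V1 (V2 x) x := by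
    intro x hx
    exact ((hv1.differentiableOn (by norm_num) x (hsub hx)).hasDerivWithinAt).hasDerivAt
      (Icc_mem_nhds hx.1 hx.2)
  have hdv : ∀ x ∈ Set.Ioo (-a) a, deriv v x = V1 x := fun x hx => (hD1 x hx).deriv
  have hddv : ∀ x ∈ Set.Ioo (-a) a, deriv (deriv v) x = V2 x := by
    intro x hx
    have hEq : deriv v =ᶠ[nhds x] V1 := by
      filter_upwards [isOpen_Ioo.mem_nhds hx] with y hy using hdv y hy
    rw [hEq.deriv_eq]
    exact (hD2 x hx).deriv
  -- bounds
  obtain ⟨M, hM⟩ := (isCompact_Icc (a := -a) (b := a)).exists_bound_of_continuousOn hV1c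
  have hM0 : 0 ≤ M := le_trans (norm_nonneg _) (hM a ⟨hA.le, le_rfl⟩)
  have hvb : ∀ b ∈ Set.Icc (-a) a, |v b| ≤ M * (a - b) := by
    intro b hb
    have := (convex_Icc (-a) a).norm_image_sub_le_of_norm_hasDerivWithin_le hD1' hM
      (⟨hA.le, le_rfl⟩ : a ∈ Set.Icc (-a) a) hb
    rw [h2] at this
    simpa [Real.norm_eq_abs, abs_of_nonneg (show (0:ℝ) ≤ a - b by linarith [hb.2]),
      abs_sub_comm] using this
  have hvb' : ∀ b ∈ Set.Icc (-a) a, |v b| ≤ M * (b + a) := by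
    intro b hb
    have := (convex_Icc (-a) a).norm_image_sub_le_of_norm_hasDerivWithin_le hD1' hM
      (⟨le_rfl, hA.le⟩ : -a ∈ Set.Icc (-a) a) hb
    rw [h1] at this
    simpa [Real.norm_eq_abs, abs_of_nonneg (show (0:ℝ) ≤ b + a by linarith [hb.1]),
      sub_neg_eq_add] using this
  have huIcc : Set.uIcc (-a) a = Set.Icc (-a) a := Set.uIcc_of_le hA.le
  -- integrabilities
  have hintOf : ∀ f : ℝ → ℝ, ContinuousOn f (Set.Icc (-a) a) →
      IntervalIntegrable f volume (-a) a := by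
    intro f hf
    exact (huIcc ▸ hf).intervalIntegrable
  have hi0 : IntervalIntegrable (fun x => (v x) ^ 2) volume (-a) a := hintOf _ (hvc.pow 2)
  have hi1 : IntervalIntegrable (fun x => (V1 x) ^ 2) volume (-a) a := hintOf _ (hV1c.pow 2)
  have hi2 : IntervalIntegrable (fun x => (V2 x) ^ 2) volume (-a) a := hintOf _ (hV2c.pow 2)
  have hiJ : IntervalIntegrable (fun x => v x * V2 x) volume (-a) a := hintOf _ (hvc.mul hV2c)
  set I0 := ∫ x in (-a)..a, (v x) ^ 2 with hI0
  set I1 := ∫ x in (-a)..a, (V1 x) ^ 2 with hI1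
  set I2 := ∫ x in (-a)..a, (V2 x) ^ 2 with hI2
  set J := ∫ x in (-a)..a, v x * V2 x with hJ
  -- (A) Wirtinger
  have hWir : 0 ≤ I1 - c ^ 2 * I0 := by
    set g : ℝ → ℝ := fun x => (V1 x) ^ 2 - c ^ 2 * (v x) ^ 2 with hg
    have hgc : ContinuousOn g (Set.Icc (-a) a) := (hV1c.pow 2).sub (continuousOn_const.mul (hvc.pow 2))
    have hsplit : (∫ x in (-a)..a, g x) = I1 - c ^ 2 * I0 := by
      rw [hg, intervalIntegral.integral_sub hi1 (hi0.const_mul _), intervalIntegral.integral_const_mul]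
    rw [← hsplit]
    apply aux_limit a ha g hgc (π * M ^ 2)
    intro b hb0 hba
    set X := a - b with hX
    have hX0 : 0 < X := by rw [hX]; linarith
    have hbb : -b ≤ b := by linarith
    have hsubb : Set.Icc (-b) b ⊆ Set.Ioo (-a) a := fun x hx => ⟨by linarith [hx.1], by linarith [hx.2]⟩
    have hsubb' : Set.Icc (-b) b ⊆ Set.Icc (-a) a := hsubb.trans hsub
    set T : ℝ → ℝ := fun x => Real.tan (c * x) with hT
    have hcos : ∀ x ∈ Set.Icc (-b) b, 0 < Real.cos (c * x) := by
      intro x hx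
      apply Real.cos_pos_of_mem_Ioo
      constructor
      · rw [← hca]; nlinarith [hx.1]
      · rw [← hca]; nlinarith [hx.2]
    have hTc : ContinuousOn T (Set.Icc (-b) b) := by
      intro x hx
      have h2 : ContinuousAt (fun y : ℝ => c * y) x := (continuous_const.mul continuous_id).continuousAt
      exact ((Real.continuousAt_tan.2 (ne_of_gt (hcos x hx))).comp h2).continuousWithinAt
    have hTd : ∀ x ∈ Set.Icc (-b) b, HasDerivAt T (c * (1 + T x ^ 2)) x := by
      intro x hx
      have hne := ne_of_gt (hcos x hx)
      have hd1 : HasDerivAt Real.tan (1 / Real.cos (c * x) ^ 2) (c * x) := Real.hasDerivAt_tan hne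
      have hd2 : HasDerivAt (fun y : ℝ => c * y) c x := by
        simpa using (hasDerivAt_id x).const_mul c
      have hd3 := hd1.comp x hd2
      refine hd3.congr_deriv ?_
      have hinv : (Real.cos (c * x) ^ 2)⁻¹ = 1 + Real.tan (c * x) ^ 2 := by
        rw [← Real.inv_one_add_tan_sq hne, inv_inv]
      rw [one_div, hinv, hT]; ring
    set W : ℝ → ℝ := fun x => c * (2 * v x * V1 x) * T x + c * (v x) ^ 2 * (c * (1 + T x ^ 2)) with hW
    have hhd : ∀ x ∈ Set.uIcc (-b) b, HasDerivAt (fun y => c * (v y) ^ 2 * T y) (W x) x := by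
      intro x hx
      rw [Set.uIcc_of_le hbb] at hx
      have hx' := hsubb hx
      have hv2 : HasDerivAt (fun y => c * (v y) ^ 2) (c * (2 * v x * V1 x)) x := by
        have := ((hD1 x hx').pow 2).const_mul c
        refine this.congr_deriv ?_
        push_cast
        ring
      exact hv2.mul (hTd x hx)
    have hWc : ContinuousOn W (Set.Icc (-b) b) := by
      apply ContinuousOn.add
      · exact (continuousOn_const.mul ((continuousOn_const.mul (hvc.mono hsubb')).mul
          (hV1c.mono hsubb'))).mul hTc
      · exact (continuousOn_const.mul ((hvc.mono hsubb').pow 2)).mul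
          (continuousOn_const.mul (continuousOn_const.add (hTc.pow 2)))
    have hintW : IntervalIntegrable W volume (-b) b := by
      apply ContinuousOn.intervalIntegrable
      rwa [Set.uIcc_of_le hbb]
    have hftc := intervalIntegral.integral_eq_sub_of_hasDerivAt hhd hintW
    have hsqc : ContinuousOn (fun x => (V1 x + c * v x * T x) ^ 2) (Set.Icc (-b) b) :=
      (((hV1c.mono hsubb').add ((continuousOn_const.mul (hvc.mono hsubb')).mul hTc)).pow 2)
    have hintSq : IntervalIntegrable (fun x => (V1 x + c * v x * T x) ^ 2) volume (-b) b := by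
      apply ContinuousOn.intervalIntegrable
      rwa [Set.uIcc_of_le hbb]
    have hgid : (∫ x in (-b)..b, g x)
        = (∫ x in (-b)..b, (V1 x + c * v x * T x) ^ 2) - ∫ x in (-b)..b, W x := by
      rw [← intervalIntegral.integral_sub hintSq hintW]
      apply intervalIntegral.integral_congr
      intro x hx
      rw [hg, hW]
      ring
    have hsqnn : 0 ≤ ∫ x in (-b)..b, (V1 x + c * v x * T x) ^ 2 :=
      intervalIntegral.integral_nonneg hbb (fun u _ => sq_nonneg _)
    -- bound the boundary term
    have hTboundary : c * (v b) ^ 2 * T b - c * (v (-b)) ^ 2 * T (-b) ≤ π * M ^ 2 * X := by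
      have hTneg : T (-b) = -T b := by
        rw [hT]
        simp only
        rw [show c * (-b) = -(c * b) by ring, Real.tan_neg]
      have hTb0 : 0 ≤ T b := by
        rw [hT]
        apply Real.tan_nonneg_of_nonneg_of_le_pi_div_two (by positivity)
        rw [← hca]; nlinarith
      have hcosb : Real.cos (c * b) = Real.sin (c * X) := by
        rw [← Real.sin_pi_div_two_sub, ← hca]
        congr 1
        rw [hX]; ring
      have hsin : 2 / π * (c * X) ≤ Real.sin (c * X) := by
        apply Real.mul_le_sin (by positivity)
        rw [← hca]; nlinarith
      have hsin0 : 0 < 2 / π * (c * X) := by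
        have := Real.pi_pos
        positivity
      have hcos0 : 0 < Real.cos (c * b) := hcos b ⟨by linarith, le_rfl⟩
      have hTb1 : T b ≤ 1 / Real.cos (c * b) := by
        rw [hT]
        simp only
        rw [Real.tan_eq_sin_div_cos]
        gcongr
        exact Real.sin_le_one _
      have hTb2 : 1 / Real.cos (c * b) ≤ π / (2 * (c * X)) := by
        rw [hcosb]
        have h1d := one_div_le_one_div_of_le hsin0 hsin
        have heq : 1 / (2 / π * (c * X)) = π / (2 * (c * X)) := by
          have hπ := Real.pi_pos
          field_simp
        rw [heq] at h1d
        exact h1d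
      have hTb : T b ≤ π / (2 * (c * X)) := hTb1.trans hTb2
      have hcX : 0 < c * X := by positivity
      have hcTb : c * T b ≤ π / (2 * X) := by
        have hmul := mul_le_mul_of_nonneg_left hTb hc0.le
        have heq2 : c * (π / (2 * (c * X))) = π / (2 * X) := by
          field_simp
        rw [heq2] at hmul
        exact hmul
      have hb1 : |v b| ≤ M * X := by
        have := hvb b (hsubb' ⟨hbb, le_rfl⟩)
        rwa [← hX] at this
      have hb2 : |v (-b)| ≤ M * X := by
        have := hvb' (-b) (hsubb' ⟨le_rfl, hbb⟩)
        rw [hX]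
        have heq : -b + a = a - b := by ring
        rwa [heq] at this
      have sq1 : (v b) ^ 2 ≤ (M * X) ^ 2 := by
        have := pow_le_pow_left₀ (abs_nonneg (v b)) hb1 2
        rwa [sq_abs] at this
      have sq2 : (v (-b)) ^ 2 ≤ (M * X) ^ 2 := by
        have := pow_le_pow_left₀ (abs_nonneg (v (-b))) hb2 2
        rwa [sq_abs] at this
      have hsum : (v b) ^ 2 + (v (-b)) ^ 2 ≤ 2 * (M * X) ^ 2 := by linarith
      have hprod : (c * T b) * ((v b) ^ 2 + (v (-b)) ^ 2) ≤ (π / (2 * X)) * (2 * (M * X) ^ 2) := by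
        apply mul_le_mul hcTb hsum (by positivity) ?_
        have := Real.pi_pos
        positivity
      have heq3 : (π / (2 * X)) * (2 * (M * X) ^ 2) = π * M ^ 2 * X := by
        field_simp
      rw [hTneg]
      have hlhs : c * v b ^ 2 * T b - c * v (-b) ^ 2 * -T b
          = (c * T b) * ((v b) ^ 2 + (v (-b)) ^ 2) := by ring
      rw [hlhs]
      exact heq3 ▸ hprod
    have hXa : X = a - b := hX
    linarith [hgid, hftc, hsqnn, hTboundary, hXa]
  -- (B) integration by parts
  have hIBP : I1 + J = 0 := by
    set g : ℝ → ℝ := fun x => (V1 x) ^ 2 + v x * V2 x with hg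
    have hgc : ContinuousOn g (Set.Icc (-a) a) := (hV1c.pow 2).add (hvc.mul hV2c)
    have hsum : (∫ x in (-a)..a, g x) = I1 + J := intervalIntegral.integral_add hi1 hiJ
    have key : ∀ b : ℝ, 0 < b → b < a → |∫ x in (-b)..b, g x| ≤ 2 * M ^ 2 * (a - b) := by
      intro b hb0 hba
      have hbb : -b ≤ b := by linarith
      have hsubb : Set.Icc (-b) b ⊆ Set.Ioo (-a) a := fun x hx => ⟨by linarith [hx.1], by linarith [hx.2]⟩
      have hsubb' : Set.Icc (-b) b ⊆ Set.Icc (-a) a := hsubb.trans hsub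
      have hid : ∀ x ∈ Set.uIcc (-b) b, HasDerivAt (fun y => v y * V1 y) (g x) x := by
        intro x hx
        rw [Set.uIcc_of_le hbb] at hx
        have hx' := hsubb hx
        have := (hD1 x hx').mul (hD2 x hx')
        refine this.congr_deriv ?_
        rw [hg]; ring
      have hint' : IntervalIntegrable g volume (-b) b := by
        apply ContinuousOn.intervalIntegrable
        rw [Set.uIcc_of_le hbb]
        exact hgc.mono hsubb'
      have hftc := intervalIntegral.integral_eq_sub_of_hasDerivAt hid hint'
      rw [hftc]
      have hb1 : |v b| ≤ M * (a - b) := hvb b (hsubb' ⟨le_refl (-b) |>.trans hbb, le_refl b⟩)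
      have hb2 : |v (-b)| ≤ M * (a - b) := by
        have := hvb' (-b) (hsubb' ⟨le_refl (-b), hbb⟩)
        simpa [neg_add_eq_sub] using this
      have hV1b : |V1 b| ≤ M := by
        have := hM b (hsubb' ⟨hbb, le_refl b⟩)
        rwa [Real.norm_eq_abs] at this
      have hV1b' : |V1 (-b)| ≤ M := by
        have := hM (-b) (hsubb' ⟨le_refl (-b), hbb⟩)
        rwa [Real.norm_eq_abs] at this
      have e1 : |v b * V1 b| ≤ M * (a - b) * M := by
        rw [abs_mul]
        exact mul_le_mul hb1 hV1b (abs_nonneg _) (mul_nonneg hM0 (by linarith))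
      have e2 : |v (-b) * V1 (-b)| ≤ M * (a - b) * M := by
        rw [abs_mul]
        exact mul_le_mul hb2 hV1b' (abs_nonneg _) (mul_nonneg hM0 (by linarith))
      calc |v b * V1 b - v (-b) * V1 (-b)| ≤ |v b * V1 b| + |v (-b) * V1 (-b)| := abs_sub _ _
        _ ≤ M * (a - b) * M + M * (a - b) * M := add_le_add e1 e2
        _ = 2 * M ^ 2 * (a - b) := by ring
    have hpos : 0 ≤ I1 + J := by
      rw [← hsum]
      apply aux_limit a ha g hgc (2 * M ^ 2)
      intro b hb0 hba
      have := key b hb0 hba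
      have := neg_abs_le (∫ x in (-b)..b, g x)
      linarith
    have hneg : 0 ≤ -(I1 + J) := by
      rw [← hsum, ← intervalIntegral.integral_neg]
      apply aux_limit a ha (fun x => -g x) hgc.neg (2 * M ^ 2)
      intro b hb0 hba
      rw [intervalIntegral.integral_neg]
      have := key b hb0 hba
      have := le_abs_self (∫ x in (-b)..b, g x)
      linarith
    linarith
  -- (E) expansion
  have hE : 0 ≤ I2 + 2 * c ^ 2 * J + c ^ 4 * I0 := by
    have hnn : 0 ≤ ∫ x in (-a)..a, (V2 x + c ^ 2 * v x) ^ 2 :=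
      intervalIntegral.integral_nonneg hA.le (fun u _ => sq_nonneg _)
    have e : ∀ x : ℝ, (V2 x + c ^ 2 * v x) ^ 2
        = (V2 x) ^ 2 + ((2 * c ^ 2) * (v x * V2 x) + (c ^ 4) * (v x) ^ 2) := fun x => by ring
    rw [show (∫ x in (-a)..a, (V2 x + c ^ 2 * v x) ^ 2)
        = ∫ x in (-a)..a, ((V2 x) ^ 2 + ((2 * c ^ 2) * (v x * V2 x) + (c ^ 4) * (v x) ^ 2))
        from intervalIntegral.integral_congr (fun x _ => e x)] at hnn
    rw [intervalIntegral.integral_add hi2 ((hiJ.const_mul _).add (hi0.const_mul _)),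
      intervalIntegral.integral_add (hiJ.const_mul _) (hi0.const_mul _),
      intervalIntegral.integral_const_mul, intervalIntegral.integral_const_mul] at hnn
    rw [← hI0, ← hI2, ← hJ] at hnn
    linarith
  -- conclude
  have hc2 : c ^ 2 = π ^ 2 / (4 * a ^ 2) := by
    rw [hc]; field_simp; ring
  have hgoal1 : (∫ x in (-a)..a, (deriv (deriv v) x) ^ 2) = I2 := by
    apply intervalIntegral.integral_congr_ae
    have hne : ∀ᵐ x : ℝ, x ≠ a := by
      rw [MeasureTheory.ae_iff]
      have : {x : ℝ | ¬x ≠ a} = {a} := by ext y; simp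
      rw [this]
      exact Real.volume_singleton
    filter_upwards [hne] with x hx hmem
    rw [Set.uIoc_of_le hA.le] at hmem
    rw [hddv x ⟨hmem.1, lt_of_le_of_ne hmem.2 hx⟩]
  have hgoal2 : (∫ x in (-a)..a, (deriv v x) ^ 2) = I1 := by
    apply intervalIntegral.integral_congr_ae
    have hne : ∀ᵐ x : ℝ, x ≠ a := by
      rw [MeasureTheory.ae_iff]
      have : {x : ℝ | ¬x ≠ a} = {a} := by ext y; simp
      rw [this]
      exact Real.volume_singleton
    filter_upwards [hne] with x hx hmem
    rw [Set.uIoc_of_le hA.le] at hmem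
    rw [hdv x ⟨hmem.1, lt_of_le_of_ne hmem.2 hx⟩]
  rw [ge_iff_le, hgoal1, hgoal2, ← hc2]
  nlinarith [sq_nonneg c, mul_le_mul_of_nonneg_left hWir (sq_nonneg c)]
end

section
/- Let β ∈ ℝ and let u : ℝ → ℝ be four times continuously differentiable with u''''(x) + β² u''(x) + e^{u(x)} − 1 = 0 for all x ∈ ℝ. Assume u, u′, u″ are square-integrable on ℝ, the function (e^{u} − 1)u is integrable on ℝ, and u(x), u′(x), u″(x), u‴(x) all tend to 0 as x → ±∞. Then ∫_ℝ (u″)² dx − β² ∫_ℝ (u′)² dx + ∫_ℝ (e^{u(x)} − 1) u(x) dx = 0. -/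
open MeasureTheory Real Filter

/-- Integral identity: if `u'''' + β²u'' + e^u - 1 = 0` on `ℝ`, with `u, u', u''`
square-integrable, `(e^u - 1)u` integrable, and `u, u', u'', u''' → 0` at `±∞`, then
`∫(u'')² - β²∫(u')² + ∫(e^u - 1)u = 0`. -/
theorem stmt15 (β : ℝ) (u : ℝ → ℝ) (hu : ContDiff ℝ 4 u)
    (heq : ∀ x : ℝ, iteratedDeriv 4 u x + β ^ 2 * iteratedDeriv 2 u x
        + Real.exp (u x) - 1 = 0)
    (hi1 : Integrable (fun x : ℝ => (u x) ^ 2))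
    (hi2 : Integrable (fun x : ℝ => (deriv u x) ^ 2))
    (hi3 : Integrable (fun x : ℝ => (iteratedDeriv 2 u x) ^ 2))
    (hi4 : Integrable (fun x : ℝ => (Real.exp (u x) - 1) * u x))
    (hb0 : Tendsto u atBot (nhds 0))
    (hb1 : Tendsto (deriv u) atBot (nhds 0))
    (hb2 : Tendsto (iteratedDeriv 2 u) atBot (nhds 0))
    (hb3 : Tendsto (iteratedDeriv 3 u) atBot (nhds 0))
    (ht0 : Tendsto u atTop (nhds 0))
    (ht1 : Tendsto (deriv u) atTop (nhds 0))
    (ht2 : Tendsto (iteratedDeriv 2 u) atTop (nhds 0))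
    (ht3 : Tendsto (iteratedDeriv 3 u) atTop (nhds 0)) :
    (∫ x : ℝ, (iteratedDeriv 2 u x) ^ 2) - β ^ 2 * (∫ x : ℝ, (deriv u x) ^ 2)
      + (∫ x : ℝ, (Real.exp (u x) - 1) * u x) = 0 := by
  -- derivative facts
  have hD : ∀ n : ℕ, n < 4 → ∀ x : ℝ,
      HasDerivAt (iteratedDeriv n u) (iteratedDeriv (n + 1) u x) x := by
    intro n hn x
    have h := (hu.differentiable_iteratedDeriv n (by exact_mod_cast hn)) x
    rw [iteratedDeriv_succ]
    exact h.hasDerivAt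
  have hd0 : ∀ x : ℝ, HasDerivAt u (deriv u x) x := by
    intro x
    have := hD 0 (by norm_num) x
    simpa [iteratedDeriv_one, iteratedDeriv_zero] using
      ((hu.differentiable (by norm_num)) x).hasDerivAt
  have hd1 : ∀ x : ℝ, HasDerivAt (deriv u) (iteratedDeriv 2 u x) x := by
    intro x
    have := hD 1 (by norm_num) x
    rwa [iteratedDeriv_one] at this
  -- continuity
  have hcu : Continuous u := hu.continuous
  have hc2 : Continuous (iteratedDeriv 2 u) :=
    (hu.differentiable_iteratedDeriv 2 (by norm_num)).continuous
  -- integrability of u'' * u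
  have hA : Integrable (fun x : ℝ => iteratedDeriv 2 u x * u x) := by
    refine Integrable.mono' ((hi3.add hi1).div_const 2)
      ((hc2.mul hcu).aestronglyMeasurable) (Filter.Eventually.of_forall fun x => ?_)
    have h1 := sq_nonneg (iteratedDeriv 2 u x - u x)
    have h2 := sq_nonneg (iteratedDeriv 2 u x + u x)
    rw [Real.norm_eq_abs, abs_le]
    simp only [Pi.add_apply]
    constructor <;> nlinarith
  -- integrability of u'''' * u via the equation
  have hBeq : (fun x : ℝ => iteratedDeriv 4 u x * u x)
      = fun x : ℝ => -((Real.exp (u x) - 1) * u x)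
        - β ^ 2 * (iteratedDeriv 2 u x * u x) := by
    funext x
    have h := heq x
    have h4 : iteratedDeriv 4 u x = 1 - Real.exp (u x) - β ^ 2 * iteratedDeriv 2 u x := by
      linarith
    rw [h4]; ring
  have hB : Integrable (fun x : ℝ => iteratedDeriv 4 u x * u x) := by
    rw [hBeq]
    exact hi4.neg.sub (hA.const_mul (β ^ 2))
  -- step (1): ∫ u'''' u = ∫ (u'')²
  have step1 : (∫ x : ℝ, (iteratedDeriv 4 u x * u x - (iteratedDeriv 2 u x) ^ 2)) = 0 := by
    have hF : ∀ x : ℝ, HasDerivAt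
        (fun x => iteratedDeriv 3 u x * u x - iteratedDeriv 2 u x * deriv u x)
        (iteratedDeriv 4 u x * u x - (iteratedDeriv 2 u x) ^ 2) x := by
      intro x
      have h1 := ((hD 3 (by norm_num) x).mul (hd0 x)).sub
        ((hD 2 (by norm_num) x).mul (hd1 x))
      have : iteratedDeriv 4 u x * u x + iteratedDeriv 3 u x * deriv u x
          - (iteratedDeriv 3 u x * deriv u x + iteratedDeriv 2 u x * iteratedDeriv 2 u x)
          = iteratedDeriv 4 u x * u x - (iteratedDeriv 2 u x) ^ 2 := by ring
      rwa [this] at h1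
    have hint : Integrable (fun x : ℝ => iteratedDeriv 4 u x * u x
        - (iteratedDeriv 2 u x) ^ 2) := hB.sub hi3
    have hbot : Tendsto (fun x => iteratedDeriv 3 u x * u x
        - iteratedDeriv 2 u x * deriv u x) atBot (nhds 0) := by
      have := (hb3.mul hb0).sub (hb2.mul hb1)
      simpa using this
    have htop : Tendsto (fun x => iteratedDeriv 3 u x * u x
        - iteratedDeriv 2 u x * deriv u x) atTop (nhds 0) := by
      have := (ht3.mul ht0).sub (ht2.mul ht1)
      simpa using this
    have := MeasureTheory.integral_of_hasDerivAt_of_tendsto hF hint hbot htop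
    simpa using this
  -- step (2): ∫ u'' u = -∫ (u')²
  have step2 : (∫ x : ℝ, (iteratedDeriv 2 u x * u x + (deriv u x) ^ 2)) = 0 := by
    have hG : ∀ x : ℝ, HasDerivAt (fun x => deriv u x * u x)
        (iteratedDeriv 2 u x * u x + (deriv u x) ^ 2) x := by
      intro x
      have h1 := (hd1 x).mul (hd0 x)
      have : iteratedDeriv 2 u x * u x + deriv u x * deriv u x
          = iteratedDeriv 2 u x * u x + (deriv u x) ^ 2 := by ring
      rwa [this] at h1
    have hint := hA.add hi2
    have hbot : Tendsto (fun x => deriv u x * u x) atBot (nhds 0) := by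
      simpa using hb1.mul hb0
    have htop : Tendsto (fun x => deriv u x * u x) atTop (nhds 0) := by
      simpa using ht1.mul ht0
    have := MeasureTheory.integral_of_hasDerivAt_of_tendsto hG hint hbot htop
    simpa using this
  -- step (3): the integrand from the equation is zero
  have step3 : (∫ x : ℝ, (iteratedDeriv 4 u x * u x
      + β ^ 2 * (iteratedDeriv 2 u x * u x) + (Real.exp (u x) - 1) * u x)) = 0 := by
    have hz : (fun x : ℝ => iteratedDeriv 4 u x * u x
        + β ^ 2 * (iteratedDeriv 2 u x * u x) + (Real.exp (u x) - 1) * u x)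
        = fun _ => (0 : ℝ) := by
      funext x
      have h := heq x
      calc iteratedDeriv 4 u x * u x + β ^ 2 * (iteratedDeriv 2 u x * u x)
            + (Real.exp (u x) - 1) * u x
          = (iteratedDeriv 4 u x + β ^ 2 * iteratedDeriv 2 u x
            + Real.exp (u x) - 1) * u x := by ring
        _ = 0 := by rw [h]; ring
    rw [hz]
    simp
  -- combine
  have e1 : (∫ x : ℝ, iteratedDeriv 4 u x * u x) = ∫ x : ℝ, (iteratedDeriv 2 u x) ^ 2 := by
    have := MeasureTheory.integral_sub hB hi3
    rw [step1] at this  -- careful: step1 is ∫ sub = 0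
    linarith [this]
  have e2 : (∫ x : ℝ, iteratedDeriv 2 u x * u x) = -(∫ x : ℝ, (deriv u x) ^ 2) := by
    have := MeasureTheory.integral_add hA hi2
    rw [step2] at this
    linarith [this]
  have e4 := MeasureTheory.integral_add (hB.add (hA.const_mul (β ^ 2))) hi4
  have e5 := MeasureTheory.integral_add hB (hA.const_mul (β ^ 2))
  simp only [Pi.add_apply] at e4 e5
  rw [step3] at e4
  rw [e5, MeasureTheory.integral_const_mul, e1, e2] at e4
  linarith
end

section
/- Let β ∈ ℝ and let u : ℝ → ℝ be four times continuously differentiable with u''''(x) + β² u''(x) + e^{u(x)} − 1 = 0 for all x ∈ ℝ, and suppose u(x), u′(x), u″(x), u‴(x) all tend to 0 as x → −∞. Let a < b and c ∈ ℝ with u(a) = u(b) = c. Then ∫_{a}^{b} (u″)² dx + β² ∫_{a}^{b} (u′)² dx = 2 ∫_{a}^{b} (e^{u(x)} − 1)(u(x) − c) dx + 2 ∫_{a}^{b} (e^{u(x)} − u(x) − 1) dx. -/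
open MeasureTheory Real Filter

/-- Energy identity on an interval with equal boundary values: if
`u'''' + β²u'' + e^u - 1 = 0` on `ℝ` with `u, u', u'', u''' → 0` at `-∞`, and
`u(a) = u(b) = c` with `a < b`, then
`∫_a^b(u'')² + β²∫_a^b(u')² = 2∫_a^b(e^u - 1)(u - c) + 2∫_a^b(e^u - u - 1)`. -/
theorem stmt16 (β : ℝ) (u : ℝ → ℝ) (hu : ContDiff ℝ 4 u)
    (heq : ∀ x : ℝ, iteratedDeriv 4 u x + β ^ 2 * iteratedDeriv 2 u x
        + Real.exp (u x) - 1 = 0)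
    (hb0 : Tendsto u atBot (nhds 0))
    (hb1 : Tendsto (deriv u) atBot (nhds 0))
    (hb2 : Tendsto (iteratedDeriv 2 u) atBot (nhds 0))
    (hb3 : Tendsto (iteratedDeriv 3 u) atBot (nhds 0))
    (a b c : ℝ) (hab : a < b) (hua : u a = c) (hub : u b = c) :
    (∫ x in a..b, (iteratedDeriv 2 u x) ^ 2) + β ^ 2 * (∫ x in a..b, (deriv u x) ^ 2)
      = 2 * (∫ x in a..b, (Real.exp (u x) - 1) * (u x - c))
        + 2 * (∫ x in a..b, (Real.exp (u x) - u x - 1)) := by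
  -- basic differentiability facts
  have e1 : iteratedDeriv 1 u = deriv u := iteratedDeriv_one
  have e2 : iteratedDeriv 2 u = deriv (deriv u) := by
    rw [show (2:ℕ) = 1 + 1 from rfl, iteratedDeriv_succ, iteratedDeriv_one]
  have e3 : iteratedDeriv 3 u = deriv (iteratedDeriv 2 u) := by
    rw [show (3:ℕ) = 2 + 1 from rfl, iteratedDeriv_succ]
  have e4 : iteratedDeriv 4 u = deriv (iteratedDeriv 3 u) := by
    rw [show (4:ℕ) = 3 + 1 from rfl, iteratedDeriv_succ]
  have hd0 : Differentiable ℝ u := hu.differentiable (by norm_num)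
  have hd1 : Differentiable ℝ (deriv u) := by
    have := hu.differentiable_iteratedDeriv 1 (by norm_num)
    rwa [e1] at this
  have hd2 : Differentiable ℝ (iteratedDeriv 2 u) :=
    hu.differentiable_iteratedDeriv 2 (by norm_num)
  have hd3 : Differentiable ℝ (iteratedDeriv 3 u) :=
    hu.differentiable_iteratedDeriv 3 (by norm_num)
  have H0 : ∀ x, HasDerivAt u (deriv u x) x := fun x => (hd0 x).hasDerivAt
  have H1 : ∀ x, HasDerivAt (deriv u) (iteratedDeriv 2 u x) x := fun x => by
    rw [e2]; exact (hd1 x).hasDerivAt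
  have H2 : ∀ x, HasDerivAt (iteratedDeriv 2 u) (iteratedDeriv 3 u x) x := fun x => by
    rw [e3]; exact (hd2 x).hasDerivAt
  have H3 : ∀ x, HasDerivAt (iteratedDeriv 3 u) (iteratedDeriv 4 u x) x := fun x => by
    rw [e4]; exact (hd3 x).hasDerivAt
  have hc0 : Continuous u := hu.continuous
  have hc1 : Continuous (deriv u) := hd1.continuous
  have hc2 : Continuous (iteratedDeriv 2 u) := hd2.continuous
  have hc4 : Continuous (iteratedDeriv 4 u) := by
    have : iteratedDeriv 4 u = fun x => 1 - Real.exp (u x) - β ^ 2 * iteratedDeriv 2 u x :=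
      funext fun x => by linarith [heq x]
    rw [this]
    exact (continuous_const.sub (Real.continuous_exp.comp hc0)).sub (continuous_const.mul hc2)
  -- the Pohozaev function
  set P : ℝ → ℝ := fun y => deriv u y * iteratedDeriv 3 u y - (iteratedDeriv 2 u y) ^ 2 / 2
      + β ^ 2 / 2 * (deriv u y) ^ 2 + Real.exp (u y) - u y - 1 with hPdef
  have hP : ∀ x, HasDerivAt P 0 x := by
    intro x
    have A := (((((((H1 x).mul (H3 x)).sub (((H2 x).pow 2).div_const 2)).add
        (((H1 x).pow 2).const_mul (β ^ 2 / 2))).add ((H0 x).exp)).sub (H0 x)).sub_const 1)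
    refine A.congr_deriv ?_
    push_cast
    linear_combination (deriv u x) * heq x
  have hPconst : ∀ x y, P x = P y :=
    is_const_of_deriv_eq_zero (fun x => (hP x).differentiableAt) (fun x => (hP x).deriv)
  have hPtend : Tendsto P atBot (nhds 0) := by
    have : Tendsto P atBot (nhds (0 * 0 - 0 ^ 2 / 2 + β ^ 2 / 2 * 0 ^ 2 + Real.exp 0 - 0 - 1)) := by
      exact (((((hb1.mul hb3).sub ((hb2.pow 2).div_const 2)).add
        ((hb1.pow 2).const_mul (β ^ 2 / 2))).add
        ((Real.continuous_exp.tendsto 0).comp hb0)).sub hb0).sub tendsto_const_nhds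
    simpa using this
  have hPo : ∀ x, P x = 0 := by
    intro x
    have h1 : Tendsto P atBot (nhds (P x)) := by
      have : P = fun _ => P x := funext fun y => hPconst y x
      rw [this]; exact tendsto_const_nhds
    exact tendsto_nhds_unique h1 hPtend
  -- the FTC function
  set W : ℝ → ℝ := fun y => (iteratedDeriv 3 u y + β ^ 2 * deriv u y) * (u y - c) with hWdef
  set W' : ℝ → ℝ := fun x => (iteratedDeriv 4 u x + β ^ 2 * iteratedDeriv 2 u x) * (u x - c)
      + (iteratedDeriv 3 u x + β ^ 2 * deriv u x) * deriv u x with hW'def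
  have hW : ∀ x, HasDerivAt W (W' x) x := fun x =>
    (((H3 x).add ((H1 x).const_mul (β ^ 2))).mul ((H0 x).sub_const c))
  have hcW' : Continuous W' :=
    ((hc4.add (continuous_const.mul hc2)).mul (hc0.sub continuous_const)).add
      (((hd3.continuous).add (continuous_const.mul hc1)).mul hc1)
  have hFTC : ∫ x in a..b, W' x = 0 := by
    rw [intervalIntegral.integral_eq_sub_of_hasDerivAt (fun x _ => hW x)
      (hcW'.intervalIntegrable a b)]
    simp [hWdef, hua, hub]
  -- pointwise identity
  have hpoint : ∀ x, (iteratedDeriv 2 u x) ^ 2 + β ^ 2 * (deriv u x) ^ 2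
      - 2 * ((Real.exp (u x) - 1) * (u x - c)) - 2 * (Real.exp (u x) - u x - 1)
      = 2 * W' x := by
    intro x
    have h1 := heq x
    have h2 := hPo x
    simp only [hPdef] at h2
    simp only [hW'def]
    linear_combination (-2 * (u x - c)) * h1 + (-2) * h2
  -- integrability
  have i1 : IntervalIntegrable (fun x => (iteratedDeriv 2 u x) ^ 2) volume a b :=
    (hc2.pow 2).intervalIntegrable a b
  have i2 : IntervalIntegrable (fun x => (deriv u x) ^ 2) volume a b :=
    (hc1.pow 2).intervalIntegrable a b
  have i3 : IntervalIntegrable (fun x => (Real.exp (u x) - 1) * (u x - c)) volume a b :=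
    (((Real.continuous_exp.comp hc0).sub continuous_const).mul
      (hc0.sub continuous_const)).intervalIntegrable a b
  have i4 : IntervalIntegrable (fun x => Real.exp (u x) - u x - 1) volume a b :=
    (((Real.continuous_exp.comp hc0).sub hc0).sub continuous_const).intervalIntegrable a b
  have key : (∫ x in a..b, (iteratedDeriv 2 u x) ^ 2) + β ^ 2 * (∫ x in a..b, (deriv u x) ^ 2)
      - 2 * (∫ x in a..b, (Real.exp (u x) - 1) * (u x - c))
      - 2 * (∫ x in a..b, (Real.exp (u x) - u x - 1)) = 0 := by
    have : (∫ x in a..b, ((iteratedDeriv 2 u x) ^ 2 + β ^ 2 * (deriv u x) ^ 2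
        - 2 * ((Real.exp (u x) - 1) * (u x - c)) - 2 * (Real.exp (u x) - u x - 1))) = 0 := by
      rw [intervalIntegral.integral_congr (g := fun x => 2 * W' x) (fun x _ => hpoint x),
        intervalIntegral.integral_const_mul, hFTC, mul_zero]
    rw [intervalIntegral.integral_sub (((i1.add (i2.const_mul (β ^ 2))).sub (i3.const_mul 2)))
        (i4.const_mul 2),
      intervalIntegral.integral_sub (i1.add (i2.const_mul (β ^ 2))) (i3.const_mul 2),
      intervalIntegral.integral_add i1 (i2.const_mul (β ^ 2)),
      intervalIntegral.integral_const_mul, intervalIntegral.integral_const_mul,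
      intervalIntegral.integral_const_mul] at this
    linarith
  linarith
end

section
/- Let β ∈ (0, √2) and let u : ℝ → ℝ be four times continuously differentiable, not identically zero, with u''''(x) + β² u''(x) + e^{u(x)} − 1 = 0 for all x ∈ ℝ. Assume u, u′, u″ are square-integrable on ℝ, the function (e^{u} − 1)u is integrable on ℝ, and u(x), u′(x), u″(x), u‴(x) all tend to 0 as x → ±∞. Then there exists x₀ ∈ ℝ with u(x₀) ≤ ln(β⁴/4). -/
open MeasureTheory Real Filter

lemma key_ineq (c t : ℝ) (hc0 : 0 < c) (hc1 : c < 1) (ht : Real.log c < t) (htne : t ≠ 0) :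
    c * t ^ 2 < (Real.exp t - 1) * t := by
  rcases lt_or_gt_of_ne htne with h | h
  · have hanti : StrictAntiOn (fun s => 1 + c * s - Real.exp s) (Set.Icc t 0) := by
      apply strictAntiOn_of_deriv_neg (convex_Icc t 0)
      · fun_prop
      · intro s hs
        rw [interior_Icc] at hs
        have hds : HasDerivAt (fun s => 1 + c * s - Real.exp s) (c - Real.exp s) s := by
          exact ((((hasDerivAt_id s).const_mul c).const_add 1).sub (Real.hasDerivAt_exp s)).congr_deriv (by simp)
        rw [hds.deriv]
        have : c < Real.exp s := by
          calc c = Real.exp (Real.log c) := (Real.exp_log hc0).symm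
          _ < Real.exp s := Real.exp_lt_exp.mpr (lt_trans ht hs.1)
        linarith
    have h0 : (fun s => 1 + c * s - Real.exp s) 0 < (fun s => 1 + c * s - Real.exp s) t :=
      hanti (Set.left_mem_Icc.mpr h.le) (Set.right_mem_Icc.mpr h.le) h
    simp only [mul_zero, add_zero, Real.exp_zero] at h0
    nlinarith
  · have := Real.add_one_lt_exp (ne_of_gt h)
    nlinarith

/-- Any nontrivial homoclinic solution of `u'''' + β²u'' + e^u - 1 = 0` with
`β ∈ (0, √2)` dips below `ln(β⁴/4)` somewhere. -/
theorem stmt17 (β : ℝ) (hβ0 : 0 < β) (hβ : β < Real.sqrt 2)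
    (u : ℝ → ℝ) (hu : ContDiff ℝ 4 u) (hne : u ≠ 0)
    (heq : ∀ x : ℝ, iteratedDeriv 4 u x + β ^ 2 * iteratedDeriv 2 u x
        + Real.exp (u x) - 1 = 0)
    (hi1 : Integrable (fun x : ℝ => (u x) ^ 2))
    (hi2 : Integrable (fun x : ℝ => (deriv u x) ^ 2))
    (hi3 : Integrable (fun x : ℝ => (iteratedDeriv 2 u x) ^ 2))
    (hi4 : Integrable (fun x : ℝ => (Real.exp (u x) - 1) * u x))
    (hb0 : Tendsto u atBot (nhds 0))
    (hb1 : Tendsto (deriv u) atBot (nhds 0))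
    (hb2 : Tendsto (iteratedDeriv 2 u) atBot (nhds 0))
    (hb3 : Tendsto (iteratedDeriv 3 u) atBot (nhds 0))
    (ht0 : Tendsto u atTop (nhds 0))
    (ht1 : Tendsto (deriv u) atTop (nhds 0))
    (ht2 : Tendsto (iteratedDeriv 2 u) atTop (nhds 0))
    (ht3 : Tendsto (iteratedDeriv 3 u) atTop (nhds 0)) :
    ∃ x₀ : ℝ, u x₀ ≤ Real.log (β ^ 4 / 4) := by
  by_contra hcon
  push_neg at hcon
  set c : ℝ := β ^ 4 / 4 with hc
  have hβ2 : β ^ 2 < 2 := by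
    nlinarith [Real.sq_sqrt (by norm_num : (2:ℝ) ≥ 0), Real.sqrt_nonneg 2]
  have hc0 : 0 < c := by positivity
  have hc1 : c < 1 := by nlinarith
  -- the integrand
  set g : ℝ → ℝ := fun x => (Real.exp (u x) - 1) * u x - c * (u x) ^ 2 with hg
  have hgint : Integrable g := hi4.sub (hi1.const_mul c)
  have hucont : Continuous u := hu.continuous
  have hgcont : Continuous g := by
    apply Continuous.sub
    · exact ((Real.continuous_exp.comp hucont).sub continuous_const).mul hucont
    · exact continuous_const.mul (hucont.pow 2)
  have hgnonneg : ∀ x, 0 ≤ g x := by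
    intro x
    by_cases hx : u x = 0
    · simp [hg, hx]
    · have := key_ineq c (u x) hc0 hc1 (hcon x) hx
      simp only [hg]; linarith
  -- positivity of the integral
  obtain ⟨x₁, hx₁⟩ : ∃ a, u a ≠ 0 := by
    by_contra hz; push_neg at hz
    exact hne (funext fun a => hz a)
  have hgx₁ : 0 < g x₁ := by
    have := key_ineq c (u x₁) hc0 hc1 (hcon x₁) hx₁
    simp only [hg]; linarith
  have hIpos : 0 < ∫ x, g x := by
    rw [integral_pos_iff_support_of_nonneg hgnonneg hgint]
    have hopen : IsOpen {x | 0 < g x} := isOpen_lt continuous_const hgcont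
    have hsub : {x | 0 < g x} ⊆ Function.support g := fun x hx => ne_of_gt hx
    exact lt_of_lt_of_le (hopen.measure_pos volume ⟨x₁, hgx₁⟩) (measure_mono hsub)
  -- differentiability facts
  have hd0 : Differentiable ℝ u := hu.differentiable (by norm_num)
  have hd1 : Differentiable ℝ (deriv u) := by
    have := hu.differentiable_iteratedDeriv 1 (by norm_num)
    simpa [iteratedDeriv_one] using this
  have hd2 : Differentiable ℝ (iteratedDeriv 2 u) :=
    hu.differentiable_iteratedDeriv 2 (by norm_num)
  have hd3 : Differentiable ℝ (iteratedDeriv 3 u) :=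
    hu.differentiable_iteratedDeriv 3 (by norm_num)
  have hdd1 : deriv (deriv u) = iteratedDeriv 2 u := by
    rw [show (2:ℕ) = 1 + 1 from rfl, iteratedDeriv_succ, iteratedDeriv_one]
  have hdd2 : deriv (iteratedDeriv 2 u) = iteratedDeriv 3 u := by
    rw [show (3:ℕ) = 2 + 1 from rfl]; exact (iteratedDeriv_succ).symm
  have hdd3 : deriv (iteratedDeriv 3 u) = iteratedDeriv 4 u := by
    rw [show (4:ℕ) = 3 + 1 from rfl]; exact (iteratedDeriv_succ).symm
  -- the flux function
  set F : ℝ → ℝ := fun x => iteratedDeriv 3 u x * u x - iteratedDeriv 2 u x * deriv u x with hF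
  set F' : ℝ → ℝ := fun x => iteratedDeriv 4 u x * u x - (iteratedDeriv 2 u x) ^ 2 with hF'
  have hFderiv : ∀ x, HasDerivAt F (F' x) x := by
    intro x
    have h0 : HasDerivAt u (deriv u x) x := (hd0 x).hasDerivAt
    have h1 : HasDerivAt (deriv u) (iteratedDeriv 2 u x) x := by
      rw [← hdd1]; exact (hd1 x).hasDerivAt
    have h2 : HasDerivAt (iteratedDeriv 2 u) (iteratedDeriv 3 u x) x := by
      rw [← hdd2]; exact (hd2 x).hasDerivAt
    have h3 : HasDerivAt (iteratedDeriv 3 u) (iteratedDeriv 4 u x) x := by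
      rw [← hdd3]; exact (hd3 x).hasDerivAt
    have := (h3.mul h0).sub (h2.mul h1)
    have heqd : F' x = iteratedDeriv 4 u x * u x + iteratedDeriv 3 u x * deriv u x -
        (iteratedDeriv 3 u x * deriv u x + iteratedDeriv 2 u x * iteratedDeriv 2 u x) := by
      simp only [hF']; ring
    rw [heqd]
    exact this
  have hF'cont : Continuous F' :=
    ((hu.continuous_iteratedDeriv 4 (by norm_num)).mul hucont).sub
      ((hu.continuous_iteratedDeriv 2 (by norm_num)).pow 2)
  -- pointwise inequality g ≤ -F'
  have hptwise : ∀ x, g x ≤ -F' x := by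
    intro x
    have h2 : (iteratedDeriv 4 u x + β ^ 2 * iteratedDeriv 2 u x
        + Real.exp (u x) - 1) * u x = 0 := by rw [heq x]; ring
    simp only [hg, hF', hc]
    nlinarith [sq_nonneg (iteratedDeriv 2 u x + β ^ 2 / 2 * u x), h2]
  -- interval integral bound for R ≥ 0
  have hbound : ∀ R : ℝ, 0 ≤ R → (∫ x in (-R)..R, g x) ≤ F (-R) - F R := by
    intro R hR
    have hRR : -R ≤ R := by linarith
    have step1 : (∫ x in (-R)..R, g x) ≤ ∫ x in (-R)..R, -F' x := by
      apply intervalIntegral.integral_mono_on hRR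
        hgint.intervalIntegrable
        (hF'cont.neg.intervalIntegrable _ _)
      intro x _
      exact hptwise x
    have step2 : (∫ x in (-R)..R, -F' x) = F (-R) - F R := by
      have : (∫ x in (-R)..R, -F' x) = (fun x => -F x) R - (fun x => -F x) (-R) := by
        apply intervalIntegral.integral_eq_sub_of_hasDerivAt
        · intro x _
          exact (hFderiv x).neg
        · exact hF'cont.neg.intervalIntegrable _ _
      rw [this]; ring
    linarith
  -- limits
  have hlim1 : Tendsto (fun R : ℝ => ∫ x in (-R)..R, g x) atTop (nhds (∫ x, g x)) :=
    intervalIntegral_tendsto_integral hgint tendsto_neg_atTop_atBot tendsto_id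
  have hFtop : Tendsto F atTop (nhds 0) := by
    have := (ht3.mul ht0).sub (ht2.mul ht1)
    simpa using this
  have hFbot : Tendsto F atBot (nhds 0) := by
    have := (hb3.mul hb0).sub (hb2.mul hb1)
    simpa using this
  have hlim2 : Tendsto (fun R : ℝ => F (-R) - F R) atTop (nhds 0) := by
    have := (hFbot.comp tendsto_neg_atTop_atBot).sub hFtop
    simpa using this
  have hIle : (∫ x, g x) ≤ 0 := by
    apply le_of_tendsto_of_tendsto hlim1 hlim2
    filter_upwards [eventually_ge_atTop (0:ℝ)] with R hR
    exact hbound R hR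
  linarith
end

section
/- Let β ∈ ℝ and let u : ℝ → ℝ be four times continuously differentiable with u''''(x) + β² u''(x) + u(x)³ + 3u(x)² + 2u(x) = 0 for all x ∈ ℝ, and suppose u(x), u′(x), u″(x), u‴(x) all tend to 0 as x → −∞. Then for every x ∈ ℝ: u′(x) u‴(x) − (u″(x))²/2 + (β²/2)(u′(x))² + (1/4) u(x)² (u(x) + 2)² = 0. -/
open MeasureTheory Real Filter

/-- Pohozaev-type pointwise identity for the (shifted) Swift–Hohenberg equation:
if `u'''' + β²u'' + u³ + 3u² + 2u = 0` on `ℝ` and `u, u', u'', u''' → 0` as `x → -∞`,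
then `u'u''' - (u'')²/2 + (β²/2)(u')² + (1/4)u²(u+2)² = 0` everywhere. -/
theorem stmt18 (β : ℝ) (u : ℝ → ℝ) (hu : ContDiff ℝ 4 u)
    (heq : ∀ x : ℝ, iteratedDeriv 4 u x + β ^ 2 * iteratedDeriv 2 u x
        + (u x) ^ 3 + 3 * (u x) ^ 2 + 2 * u x = 0)
    (h0 : Tendsto u atBot (nhds 0))
    (h1 : Tendsto (deriv u) atBot (nhds 0))
    (h2 : Tendsto (iteratedDeriv 2 u) atBot (nhds 0))
    (h3 : Tendsto (iteratedDeriv 3 u) atBot (nhds 0)) :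
    ∀ x : ℝ, deriv u x * iteratedDeriv 3 u x - (iteratedDeriv 2 u x) ^ 2 / 2
      + (β ^ 2 / 2) * (deriv u x) ^ 2 + (1 / 4) * (u x) ^ 2 * (u x + 2) ^ 2 = 0 := by
  set E : ℝ → ℝ := fun x => deriv u x * iteratedDeriv 3 u x - (iteratedDeriv 2 u x) ^ 2 / 2
      + (β ^ 2 / 2) * (deriv u x) ^ 2 + (1 / 4) * (u x) ^ 2 * (u x + 2) ^ 2 with hE
  -- derivative facts
  have hdk : ∀ k : ℕ, k < 4 → ∀ x : ℝ,
      HasDerivAt (iteratedDeriv k u) (iteratedDeriv (k + 1) u x) x := by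
    intro k hk x
    have hdiff : Differentiable ℝ (iteratedDeriv k u) :=
      hu.differentiable_iteratedDeriv k (by exact_mod_cast hk)
    have := (hdiff x).hasDerivAt
    rwa [iteratedDeriv_succ]
    
  have h01 : ∀ x : ℝ, HasDerivAt u (deriv u x) x := by
    intro x
    have := hdk 0 (by norm_num) x
    simpa [iteratedDeriv_one, iteratedDeriv_zero] using this
  have h12 : ∀ x : ℝ, HasDerivAt (deriv u) (iteratedDeriv 2 u x) x := by
    intro x
    have := hdk 1 (by norm_num) x
    simpa [iteratedDeriv_one] using this
  have h23 : ∀ x : ℝ, HasDerivAt (iteratedDeriv 2 u) (iteratedDeriv 3 u x) x :=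
    fun x => hdk 2 (by norm_num) x
  have h34 : ∀ x : ℝ, HasDerivAt (iteratedDeriv 3 u) (iteratedDeriv 4 u x) x :=
    fun x => hdk 3 (by norm_num) x
  have hEd : ∀ x : ℝ, HasDerivAt E 0 x := by
    intro x
    have hraw : HasDerivAt E
        (iteratedDeriv 2 u x * iteratedDeriv 3 u x + deriv u x * iteratedDeriv 4 u x
          - (2 * iteratedDeriv 3 u x * iteratedDeriv 2 u x) / 2
          + β ^ 2 / 2 * (2 * iteratedDeriv 2 u x * deriv u x)
          + (1 / 4 * (2 * u x * deriv u x) * (u x + 2) ^ 2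
            + 1 / 4 * (u x) ^ 2 * (2 * (u x + 2) * deriv u x))) x := by
      refine HasDerivAt.add (HasDerivAt.add (HasDerivAt.sub ?_ ?_) ?_) ?_
      · exact (h12 x).mul (h34 x)
      · have := ((h23 x).pow 2).div_const 2
        simpa [mul_comm, mul_assoc, mul_left_comm] using this
      · have := ((h12 x).pow 2).const_mul (β ^ 2 / 2)
        simpa [mul_comm, mul_assoc, mul_left_comm] using this
      · have hu2 : HasDerivAt (fun y => 1 / 4 * (u y) ^ 2)
            (1 / 4 * (2 * u x * deriv u x)) x := by
          simpa [pow_one] using ((h01 x).pow 2).const_mul (1 / (4:ℝ))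
        have hv2 : HasDerivAt (fun y => (u y + 2) ^ 2)
            (2 * (u x + 2) * deriv u x) x := by
          have := ((h01 x).add_const 2).fun_pow 2
          simpa [pow_one] using this
        have := hu2.fun_mul hv2
        simpa [mul_assoc, mul_comm, mul_left_comm] using this
    have key : iteratedDeriv 2 u x * iteratedDeriv 3 u x + deriv u x * iteratedDeriv 4 u x
          - (2 * iteratedDeriv 3 u x * iteratedDeriv 2 u x) / 2
          + β ^ 2 / 2 * (2 * iteratedDeriv 2 u x * deriv u x)
          + (1 / 4 * (2 * u x * deriv u x) * (u x + 2) ^ 2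
            + 1 / 4 * (u x) ^ 2 * (2 * (u x + 2) * deriv u x))
        = deriv u x * (iteratedDeriv 4 u x + β ^ 2 * iteratedDeriv 2 u x
            + (u x) ^ 3 + 3 * (u x) ^ 2 + 2 * u x) := by ring
    have : HasDerivAt E (deriv u x * (iteratedDeriv 4 u x + β ^ 2 * iteratedDeriv 2 u x
            + (u x) ^ 3 + 3 * (u x) ^ 2 + 2 * u x)) x := key ▸ hraw
    simpa [heq x] using this
  have hconst : ∀ x y : ℝ, E x = E y :=
    is_const_of_deriv_eq_zero (fun x => (hEd x).differentiableAt)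
      (fun x => (hEd x).deriv)
  intro x
  have hlim : Tendsto E atBot (nhds ((0:ℝ) * 0 - 0 ^ 2 / 2 + β ^ 2 / 2 * 0 ^ 2
      + 1 / 4 * 0 ^ 2 * (0 + 2) ^ 2)) := by
    exact (((h1.mul h3).sub ((h2.pow 2).div_const 2)).add
      (((h1.pow 2)).const_mul (β ^ 2 / 2))).add
      (((h0.pow 2).const_mul (1 / 4)).mul ((h0.add_const 2).pow 2))
  have hlim0 : Tendsto E atBot (nhds 0) := by simpa using hlim
  have hlimc : Tendsto E atBot (nhds (E x)) := by
    have : E = fun _ => E x := funext fun y => hconst y x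
    rw [this]; exact tendsto_const_nhds
  have := tendsto_nhds_unique hlimc hlim0
  simpa [hE] using this
end

section
/- Let β ∈ ℝ and let u : ℝ → ℝ be four times continuously differentiable with u''''(x) + β² u''(x) + u(x)³ + 3u(x)² + 2u(x) = 0 for all x ∈ ℝ, with u(x), u′(x), u″(x), u‴(x) all tending to 0 as x → −∞, and with u(x) > −2 for all x ∈ ℝ. Let c ≤ −1 and a < b satisfy u(a) = u(b) = c and u(x) ≤ c for all x ∈ [a, b]. Then (1/2)∫_{a}^{b} (u″)² dx − (β²/2)∫_{a}^{b} (u′)² dx + (1/4)∫_{a}^{b} u(x)² (u(x) + 2)² dx ≥ 0. -/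
open MeasureTheory Real Filter

set_option maxHeartbeats 1000000

/-- Nonnegativity of the local energy on a trough: if `u'''' + β²u'' + u³ + 3u² + 2u = 0`
on `ℝ` with `u, u', u'', u''' → 0` at `-∞` and `u > -2` everywhere, and if `c ≤ -1`,
`a < b`, `u(a) = u(b) = c` with `u ≤ c` on `[a, b]`, then
`(1/2)∫_a^b(u'')² - (β²/2)∫_a^b(u')² + (1/4)∫_a^b u²(u+2)² ≥ 0`. -/
theorem stmt19 (β : ℝ) (u : ℝ → ℝ) (hu : ContDiff ℝ 4 u)
    (heq : ∀ x : ℝ, iteratedDeriv 4 u x + β ^ 2 * iteratedDeriv 2 u x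
        + (u x) ^ 3 + 3 * (u x) ^ 2 + 2 * u x = 0)
    (h0 : Tendsto u atBot (nhds 0))
    (h1 : Tendsto (deriv u) atBot (nhds 0))
    (h2 : Tendsto (iteratedDeriv 2 u) atBot (nhds 0))
    (h3 : Tendsto (iteratedDeriv 3 u) atBot (nhds 0))
    (hgt : ∀ x : ℝ, -2 < u x)
    (c a b : ℝ) (hc : c ≤ -1) (hab : a < b)
    (hua : u a = c) (hub : u b = c)
    (hle : ∀ x ∈ Set.Icc a b, u x ≤ c) :
    (1 / 2) * (∫ x in a..b, (iteratedDeriv 2 u x) ^ 2)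
      - (β ^ 2 / 2) * (∫ x in a..b, (deriv u x) ^ 2)
      + (1 / 4) * (∫ x in a..b, (u x) ^ 2 * (u x + 2) ^ 2) ≥ 0 := by
  set d1 : ℝ → ℝ := deriv u with hd1
  set d2 : ℝ → ℝ := deriv d1 with hd2
  set d3 : ℝ → ℝ := deriv d2 with hd3
  set d4 : ℝ → ℝ := deriv d3 with hd4
  -- smoothness chain
  have cd1 : ContDiff ℝ 3 d1 := by
    rw [show (4 : WithTop ℕ∞) = 3 + 1 from rfl, contDiff_succ_iff_deriv] at hu
    exact hu.2.2
  have cd2 : ContDiff ℝ 2 d2 := by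
    rw [show (3 : WithTop ℕ∞) = 2 + 1 from rfl, contDiff_succ_iff_deriv] at cd1
    exact cd1.2.2
  have cd3 : ContDiff ℝ 1 d3 := by
    rw [show (2 : WithTop ℕ∞) = 1 + 1 from rfl, contDiff_succ_iff_deriv] at cd2
    exact cd2.2.2
  have c4 : Continuous d4 := (contDiff_one_iff_deriv.mp cd3).2
  have cu : Continuous u := hu.continuous
  have c1 : Continuous d1 := cd1.continuous
  have c2 : Continuous d2 := cd2.continuous
  have c3 : Continuous d3 := cd3.continuous
  have du : ∀ x, HasDerivAt u (d1 x) x :=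
    fun x => ((hu.differentiable (by norm_num)) x).hasDerivAt
  have du1 : ∀ x, HasDerivAt d1 (d2 x) x :=
    fun x => ((cd1.differentiable (by norm_num)) x).hasDerivAt
  have du2 : ∀ x, HasDerivAt d2 (d3 x) x :=
    fun x => ((cd2.differentiable (by norm_num)) x).hasDerivAt
  have du3 : ∀ x, HasDerivAt d3 (d4 x) x :=
    fun x => ((cd3.differentiable (by norm_num)) x).hasDerivAt
  -- iterated derivatives
  have e2 : iteratedDeriv 2 u = d2 := by
    show iteratedDeriv (1 + 1) u = d2
    rw [iteratedDeriv_succ, iteratedDeriv_one]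
  have e3 : iteratedDeriv 3 u = d3 := by
    show iteratedDeriv (2 + 1) u = d3
    rw [iteratedDeriv_succ, e2]
  have e4 : iteratedDeriv 4 u = d4 := by
    show iteratedDeriv (3 + 1) u = d4
    rw [iteratedDeriv_succ, e3]
  rw [e4, e2] at heq
  rw [e2] at h2
  rw [e3] at h3
  rw [e2]
  -- the energy
  set E : ℝ → ℝ := fun x => d3 x * d1 x - (1/2) * (d2 x)^2 + (β^2/2) * (d1 x)^2
      + (1/4) * ((u x)^2 * (u x + 2)^2) with hE
  have hE0 : ∀ x, HasDerivAt E 0 x := by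
    intro x
    have hraw := ((((du3 x).mul (du1 x)).sub (((du2 x).pow 2).const_mul (1/2))).add
          (((du1 x).pow 2).const_mul (β^2/2))).add
          ((((du x).pow 2).mul (((du x).add_const 2).pow 2)).const_mul (1/4))
    refine hraw.congr_deriv ?_
    simp only [Pi.pow_apply]
    push_cast
    linear_combination (d1 x) * heq x
  have hEconst : ∀ x y, E x = E y :=
    is_const_of_deriv_eq_zero (fun x => (hE0 x).differentiableAt) (fun x => (hE0 x).deriv)
  have hElim : Tendsto E atBot (nhds ((0:ℝ) * 0 - (1/2) * 0^2 + (β^2/2) * 0^2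
      + (1/4) * (0^2 * ((0:ℝ) + 2)^2))) := by
    exact (((h3.mul h1).sub ((h2.pow 2).const_mul (1/2))).add
        ((h1.pow 2).const_mul (β^2/2))).add
        (((h0.pow 2).mul ((h0.add_const 2).pow 2)).const_mul (1/4))
  have hEzero : ∀ x, E x = 0 := by
    intro x
    have hconst : E = fun _ => E x := funext fun y => hEconst y x
    rw [hconst] at hElim
    have := tendsto_nhds_unique hElim
      (tendsto_const_nhds : Tendsto (fun _ : ℝ => E x) atBot (nhds (E x)))
    rw [← this]; norm_num
  have hC : ∀ x, d3 x * d1 x = (1/2) * (d2 x)^2 - (β^2/2) * (d1 x)^2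
      - (1/4) * ((u x)^2 * (u x + 2)^2) := by
    intro x
    have := hEzero x
    simp only [hE] at this
    linarith
  -- integrability
  have i31 : IntervalIntegrable (fun x => d3 x * d1 x) volume a b :=
    (c3.mul c1).intervalIntegrable a b
  have i2 : IntervalIntegrable (fun x => (d2 x)^2) volume a b :=
    (c2.pow 2).intervalIntegrable a b
  have i1 : IntervalIntegrable (fun x => (d1 x)^2) volume a b :=
    (c1.pow 2).intervalIntegrable a b
  have iF : IntervalIntegrable (fun x => (u x)^2 * (u x + 2)^2) volume a b :=
    ((cu.pow 2).mul ((cu.add continuous_const).pow 2)).intervalIntegrable a b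
  have cg : Continuous (fun x => ((u x)^3 + 3*(u x)^2 + 2*(u x)) * (u x - c)) := by
    continuity
  have ig : IntervalIntegrable (fun x => ((u x)^3 + 3*(u x)^2 + 2*(u x)) * (u x - c))
      volume a b := cg.intervalIntegrable a b
  have ign : IntervalIntegrable (fun x => -(((u x)^3 + 3*(u x)^2 + 2*(u x)) * (u x - c)))
      volume a b := cg.neg.intervalIntegrable a b
  have iq : IntervalIntegrable
      (fun x => -(((u x)^3 + 3*(u x)^2 + 2*(u x)) * (u x - c)) - (d2 x)^2) volume a b :=
    (cg.neg.sub (c2.pow 2)).intervalIntegrable a b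
  have ib1 : IntervalIntegrable (fun x => β^2 * (d1 x)^2) volume a b :=
    (continuous_const.mul (c1.pow 2)).intervalIntegrable a b
  have ih2 : IntervalIntegrable (fun x => (1/2 : ℝ) * (d2 x)^2) volume a b :=
    (continuous_const.mul (c2.pow 2)).intervalIntegrable a b
  have ih1 : IntervalIntegrable (fun x => (β^2/2) * (d1 x)^2) volume a b :=
    (continuous_const.mul (c1.pow 2)).intervalIntegrable a b
  have ihF : IntervalIntegrable (fun x => (1/4 : ℝ) * ((u x)^2 * (u x + 2)^2)) volume a b :=
    (continuous_const.mul ((cu.pow 2).mul ((cu.add continuous_const).pow 2))).intervalIntegrable a b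
  -- named integrals
  set I2 := ∫ x in a..b, (d2 x)^2 with hI2
  set I1 := ∫ x in a..b, (d1 x)^2 with hI1
  set IF := ∫ x in a..b, (u x)^2 * (u x + 2)^2 with hIF
  set Ig := ∫ x in a..b, ((u x)^3 + 3*(u x)^2 + 2*(u x)) * (u x - c) with hIg
  -- identity (A): ∫ (d3 d1 + d2²) = Δ
  have hA : (∫ x in a..b, (d3 x * d1 x + (d2 x)^2)) = d2 b * d1 b - d2 a * d1 a := by
    apply intervalIntegral.integral_eq_sub_of_hasDerivAt
    · intro x _
      have h := (du2 x).mul (du1 x)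
      have : d3 x * d1 x + d2 x * d2 x = d3 x * d1 x + (d2 x)^2 := by ring
      rwa [this] at h
    · exact i31.add i2
  have hAsplit : (∫ x in a..b, (d3 x * d1 x + (d2 x)^2))
      = (∫ x in a..b, d3 x * d1 x) + I2 := intervalIntegral.integral_add i31 i2
  -- identity (C'): ∫ d3 d1 = ...
  have hCint : (∫ x in a..b, d3 x * d1 x)
      = (1/2) * I2 - (β^2/2) * I1 - (1/4) * IF := by
    rw [intervalIntegral.integral_congr (g := fun x => (1/2) * (d2 x)^2
        - (β^2/2) * (d1 x)^2 - (1/4) * ((u x)^2 * (u x + 2)^2)) (fun x _ => hC x)]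
    rw [intervalIntegral.integral_sub (ih2.sub ih1) ihF,
      intervalIntegral.integral_sub ih2 ih1,
      intervalIntegral.integral_const_mul, intervalIntegral.integral_const_mul,
      intervalIntegral.integral_const_mul]
  -- identity (B): the multiplier (u - c)
  have hB : (∫ x in a..b, (-(((u x)^3 + 3*(u x)^2 + 2*(u x)) * (u x - c))
        - (d2 x)^2 + β^2 * (d1 x)^2))
      = (d3 b * (u b - c) - d2 b * d1 b + β^2 * (d1 b * (u b - c)))
        - (d3 a * (u a - c) - d2 a * d1 a + β^2 * (d1 a * (u a - c))) := by
    apply intervalIntegral.integral_eq_sub_of_hasDerivAt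
        (f := fun x => d3 x * (u x - c) - d2 x * d1 x + β^2 * (d1 x * (u x - c)))
    · intro x _
      have hraw : HasDerivAt (fun x => d3 x * (u x - c) - d2 x * d1 x
            + β^2 * (d1 x * (u x - c)))
          ((d4 x * (u x - c) + d3 x * d1 x) - (d3 x * d1 x + d2 x * d2 x)
            + β^2 * (d2 x * (u x - c) + d1 x * d1 x)) x := by
        exact (((du3 x).mul ((du x).sub_const c)).sub ((du2 x).mul (du1 x))).add
          (((du1 x).mul ((du x).sub_const c)).const_mul (β^2))
      have hval : (d4 x * (u x - c) + d3 x * d1 x) - (d3 x * d1 x + d2 x * d2 x)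
            + β^2 * (d2 x * (u x - c) + d1 x * d1 x)
          = -(((u x)^3 + 3*(u x)^2 + 2*(u x)) * (u x - c)) - (d2 x)^2
            + β^2 * (d1 x)^2 := by
        linear_combination (u x - c) * heq x
      rwa [hval] at hraw
    · exact iq.add ib1
  have hBsplit : (∫ x in a..b, (-(((u x)^3 + 3*(u x)^2 + 2*(u x)) * (u x - c))
        - (d2 x)^2 + β^2 * (d1 x)^2)) = -Ig - I2 + β^2 * I1 := by
    rw [intervalIntegral.integral_add iq ib1,
      intervalIntegral.integral_sub ign i2, intervalIntegral.integral_neg,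
      intervalIntegral.integral_const_mul]
  rw [hua, hub, sub_self, mul_zero, mul_zero, mul_zero, mul_zero] at hB
  -- sign facts
  have hIg_nonpos : Ig ≤ 0 := by
    have hnn : (0:ℝ) ≤ ∫ x in a..b, -(((u x)^3 + 3*(u x)^2 + 2*(u x)) * (u x - c)) := by
      apply intervalIntegral.integral_nonneg hab.le
      intro x hx
      have h2p : (0:ℝ) < u x + 2 := by linarith [hgt x]
      have hxc : u x ≤ c := hle x hx
      have hu1 : u x + 1 ≤ 0 := by linarith
      have hun : u x ≤ 0 := by linarith
      have huc : u x - c ≤ 0 := by linarith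
      have h01 : 0 ≤ u x * (u x + 1) := by
        have h := mul_nonneg (neg_nonneg.2 hun) (neg_nonneg.2 hu1)
        rwa [neg_mul_neg] at h
      have key : (u x * (u x + 1) * (u x + 2)) * (u x - c) ≤ 0 :=
        mul_nonpos_of_nonneg_of_nonpos (mul_nonneg h01 h2p.le) huc
      have hexp : ((u x)^3 + 3*(u x)^2 + 2*(u x)) * (u x - c)
          = (u x * (u x + 1) * (u x + 2)) * (u x - c) := by ring
      rw [hexp]
      linarith
    rw [intervalIntegral.integral_neg] at hnn
    linarith
  have hI2_nonneg : (0:ℝ) ≤ I2 :=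
    intervalIntegral.integral_nonneg hab.le (fun x _ => sq_nonneg _)
  -- combine
  have hAB : (1/2) * I2 - (β^2/2) * I1 - (1/4) * IF + I2
      = d2 b * d1 b - d2 a * d1 a := by
    rw [← hCint]; rw [← hAsplit]; exact hA
  have hBB : -Ig - I2 + β^2 * I1 = -(d2 b * d1 b) - -(d2 a * d1 a) := by
    rw [← hBsplit]; rw [hB]; ring
  linarith
end
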